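/- arXiv:1310.0966 — 9 statements merged into one kernel-verified Lean document; each statement's English description precedes it below -/
import Mathlib

section
/- Sufficiency of the geometric KKT conditions: Let N ≥ 1, let q : Fin N → ℝ be priors with q antitone, and let v : Fin N → EuclideanSpace ℝ (Fin 3) with ‖v i‖ ≤ 1. Suppose r : Fin N → ℝ with r i ≥ 0 and w : Fin N → EuclideanSpace ℝ (Fin 3) satisfy the geometric KKT conditions for (q, v). Then q 0 + r 0 is the greatest element of the set of success probabilities {P(M) : M an N-outcome POVM}; in particular, the guessing probability equals q 0 + r 0, and it is attained by the POVM M i = p i • (1 − (w i 0 • σ₁ + w i 1 • σ₂ + w i 2 • σ₃)) where p is any witness of condition (ii). -/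
open Matrix Complex Finset RealInnerProductSpace
open scoped ComplexOrder

/-- The first Pauli matrix. -/
noncomputable def pauli1 : Matrix (Fin 2) (Fin 2) ℂ := !![0, 1; 1, 0]

/-- The second Pauli matrix. -/
noncomputable def pauli2 : Matrix (Fin 2) (Fin 2) ℂ := !![0, -Complex.I; Complex.I, 0]

/-- The third Pauli matrix. -/
noncomputable def pauli3 : Matrix (Fin 2) (Fin 2) ℂ := !![1, 0; 0, -1]

/-- The operator `v ⬝ σ` for a Bloch vector `v`. -/
noncomputable def blochOp (v : EuclideanSpace ℝ (Fin 3)) : Matrix (Fin 2) (Fin 2) ℂ :=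
  (v 0 : ℂ) • pauli1 + (v 1 : ℂ) • pauli2 + (v 2 : ℂ) • pauli3

/-- The qubit state with Bloch vector `v`. -/
noncomputable def qubitState (v : EuclideanSpace ℝ (Fin 3)) : Matrix (Fin 2) (Fin 2) ℂ :=
  (1 / 2 : ℂ) • (1 + blochOp v)

/-- An `N`-outcome POVM on `ℂ^d`. -/
def IsPOVM {N d : ℕ} (M : Fin N → Matrix (Fin d) (Fin d) ℂ) : Prop :=
  (∀ i, (M i).PosSemidef) ∧ ∑ i, M i = 1

/-- Priors: a probability distribution. -/
def IsPriors {N : ℕ} (q : Fin N → ℝ) : Prop :=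
  (∀ i, 0 ≤ q i) ∧ ∑ i, q i = 1

/-- Success probability of the POVM `M` for qubit states with Bloch vectors `v`
and priors `q`. -/
noncomputable def succProb {N : ℕ} (q : Fin N → ℝ) (v : Fin N → EuclideanSpace ℝ (Fin 3))
    (M : Fin N → Matrix (Fin 2) (Fin 2) ℂ) : ℝ :=
  ∑ i, q i * (Matrix.trace (qubitState (v i) * M i)).re

/-- The geometric KKT conditions for `(q, v)` satisfied by `(r, w)`. -/
def GeomKKT {N : ℕ} (q : Fin N → ℝ) (v : Fin N → EuclideanSpace ℝ (Fin 3))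
    (r : Fin N → ℝ) (w : Fin N → EuclideanSpace ℝ (Fin 3)) : Prop :=
  (∀ i j, r i • w i - r j • w j = q j • v j - q i • v i) ∧
  (∃ p : Fin N → ℝ, (∀ i, 0 < p i) ∧ (∑ i, p i = 1) ∧ (∑ i, p i • w i = 0)) ∧
  (∀ i, ‖w i‖ = 1) ∧
  (∀ i j, r i - r j = q j - q i)

lemma blochOp_eq (v : EuclideanSpace ℝ (Fin 3)) :
    blochOp v = !![(v 2 : ℂ), (v 0 : ℂ) - (v 1 : ℂ) * Complex.I;
                   (v 0 : ℂ) + (v 1 : ℂ) * Complex.I, -(v 2 : ℂ)] := by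
  ext i j
  fin_cases i <;> fin_cases j <;>
    simp [blochOp, pauli1, pauli2, pauli3] <;> ring

lemma blochOp_trace (v : EuclideanSpace ℝ (Fin 3)) : Matrix.trace (blochOp v) = 0 := by
  rw [blochOp_eq]; simp [Matrix.trace_fin_two]

lemma norm_sq_eq (u : EuclideanSpace ℝ (Fin 3)) (h : ‖u‖ = 1) :
    u 0 ^ 2 + u 1 ^ 2 + u 2 ^ 2 = 1 := by
  have := EuclideanSpace.norm_eq u
  rw [h] at this
  have h2 : Real.sqrt (∑ i, ‖u i‖ ^ 2) = 1 := this.symm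
  have h3 : (∑ i, ‖u i‖ ^ 2) = 1 := by
    have hnn : (0:ℝ) ≤ ∑ i, ‖u i‖ ^ 2 := by positivity
    nlinarith [Real.sq_sqrt hnn]
  simpa [Fin.sum_univ_three, sq_abs] using h3

lemma blochOp_smul (a : ℝ) (u : EuclideanSpace ℝ (Fin 3)) :
    blochOp (a • u) = (a : ℂ) • blochOp u := by
  simp only [blochOp, PiLp.smul_apply, smul_eq_mul, Complex.ofReal_mul, smul_add, smul_smul]

lemma blochOp_add (u x : EuclideanSpace ℝ (Fin 3)) :
    blochOp (u + x) = blochOp u + blochOp x := by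
  simp only [blochOp, PiLp.add_apply, Complex.ofReal_add, add_smul]
  abel

lemma blochOp_neg (u : EuclideanSpace ℝ (Fin 3)) : blochOp (-u) = -blochOp u := by
  have := blochOp_smul (-1) u
  simpa using this

lemma blochOp_sq (u : EuclideanSpace ℝ (Fin 3)) :
    blochOp u * blochOp u = ((u 0 ^ 2 + u 1 ^ 2 + u 2 ^ 2 : ℝ) : ℂ) • 1 := by
  rw [blochOp_eq]
  ext i j
  fin_cases i <;> fin_cases j <;>
    simp [Matrix.mul_apply, Fin.sum_univ_two, Matrix.one_apply] <;>
    push_cast <;> ring_nf <;> simp [Complex.I_sq] <;> ring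

lemma blochOp_herm (u : EuclideanSpace ℝ (Fin 3)) : (blochOp u)ᴴ = blochOp u := by
  rw [blochOp_eq]
  ext i j
  fin_cases i <;> fin_cases j <;>
    simp [Matrix.conjTranspose_apply, sub_eq_add_neg]

lemma psd_helper (u : EuclideanSpace ℝ (Fin 3)) (hu : u 0 ^ 2 + u 1 ^ 2 + u 2 ^ 2 = 1)
    {p : ℝ} (hp : 0 ≤ p) : ((p : ℂ) • (1 - blochOp u)).PosSemidef := by
  set A : Matrix (Fin 2) (Fin 2) ℂ := 1 - blochOp u with hA
  have hA2 : A * A = (2 : ℂ) • A := by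
    rw [hA, sub_mul, mul_sub, mul_sub, blochOp_sq, hu]
    simp [two_smul]
    abel
  have hherm : Aᴴ = A := by
    rw [hA, Matrix.conjTranspose_sub, Matrix.conjTranspose_one, blochOp_herm]
  have key : (p : ℂ) • A = ((Real.sqrt (p / 2) : ℂ) • A)ᴴ * ((Real.sqrt (p / 2) : ℂ) • A) := by
    rw [Matrix.conjTranspose_smul, hherm, Matrix.smul_mul, Matrix.mul_smul, hA2,
      smul_smul, smul_smul]
    congr 1
    rw [Complex.star_def, Complex.conj_ofReal, ← Complex.ofReal_mul,
      Real.mul_self_sqrt (by linarith : (0:ℝ) ≤ p / 2)]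
    push_cast
    ring
  rw [key]
  exact Matrix.posSemidef_conjTranspose_mul_self _

lemma trace_re_nonneg {D : Matrix (Fin 2) (Fin 2) ℂ} (hD : D.PosSemidef) :
    0 ≤ (Matrix.trace D).re := by
  have h : ∀ i, 0 ≤ (D i i).re := by
    intro i
    have := hD.re_dotProduct_nonneg (Pi.single i 1)
    simpa [dotProduct, Matrix.mulVec, Pi.single_apply, Finset.sum_ite_eq,
      Finset.sum_ite_eq'] using this
  have : Matrix.trace D = D 0 0 + D 1 1 := Matrix.trace_fin_two D
  rw [this, Complex.add_re]
  exact add_nonneg (h 0) (h 1)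

lemma trace_mul_re_nonneg {A B : Matrix (Fin 2) (Fin 2) ℂ}
    (hA : A.PosSemidef) (hB : B.PosSemidef) : 0 ≤ (Matrix.trace (A * B)).re := by
  obtain ⟨C, rfl⟩ : ∃ C : Matrix (Fin 2) (Fin 2) ℂ, A = Cᴴ * C := by
    open scoped MatrixOrder in
    obtain ⟨C, hC⟩ := CStarAlgebra.nonneg_iff_eq_star_mul_self.mp hA.nonneg
    exact ⟨C, hC⟩
  have h := trace_re_nonneg (hB.mul_mul_conjTranspose_same C)
  rwa [Matrix.trace_mul_cycle] at h

lemma blochOp_trace_mul (u x : EuclideanSpace ℝ (Fin 3)) :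
    Matrix.trace (blochOp u * blochOp x)
      = ((2 * (u 0 * x 0 + u 1 * x 1 + u 2 * x 2) : ℝ) : ℂ) := by
  rw [blochOp_eq, blochOp_eq]
  simp [Matrix.trace_fin_two, Matrix.mul_apply, Fin.sum_univ_two]
  push_cast
  ring_nf
  simp [Complex.I_sq]

lemma trace_state_povm (v u : EuclideanSpace ℝ (Fin 3)) (p : ℝ) :
    (Matrix.trace (qubitState v * ((p : ℂ) • (1 - blochOp u)))).re
      = p * (1 - (v 0 * u 0 + v 1 * u 1 + v 2 * u 2)) := by
  rw [qubitState, Matrix.smul_mul, Matrix.mul_smul, Matrix.trace_smul, Matrix.trace_smul]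
  have h1 : (1 + blochOp v) * (1 - blochOp u)
      = 1 - blochOp u + blochOp v - blochOp v * blochOp u := by noncomm_ring
  rw [h1]
  rw [Matrix.trace_sub, Matrix.trace_add, Matrix.trace_sub, blochOp_trace, blochOp_trace,
    Matrix.trace_one, blochOp_trace_mul]
  have h2 : (1 / 2 : ℂ) • ((p:ℂ) • ((2:ℂ) - 0 + 0 - ((2 * (v 0 * u 0 + v 1 * u 1 + v 2 * u 2) : ℝ) : ℂ)))
      = ((p * (1 - (v 0 * u 0 + v 1 * u 1 + v 2 * u 2)) : ℝ) : ℂ) := by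
    push_cast
    simp [smul_eq_mul]
    ring
  simp only [Fintype.card_fin, Nat.cast_ofNat]
  rw [h2, Complex.ofReal_re]

lemma state_decomp (a b : ℝ) (x y : EuclideanSpace ℝ (Fin 3)) :
    (a : ℂ) • qubitState x + ((b / 2 : ℝ) : ℂ) • (1 + blochOp y)
      = (((a + b) / 2 : ℝ) : ℂ) • 1 + (1 / 2 : ℂ) • blochOp (a • x + b • y) := by
  rw [qubitState, blochOp_add, blochOp_smul, blochOp_smul]
  push_cast
  module

lemma blochOp_sum {N : ℕ} (f : Fin N → EuclideanSpace ℝ (Fin 3)) :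
    blochOp (∑ i, f i) = ∑ i, blochOp (f i) := by
  classical
  induction (Finset.univ : Finset (Fin N)) using Finset.induction with
  | empty =>
      simp [show blochOp 0 = 0 by simpa using blochOp_smul 0 0]
  | insert _ _ h ih =>
      rw [Finset.sum_insert h, Finset.sum_insert h, blochOp_add, ih]

lemma euclid_sum_apply {N : ℕ} (f : Fin N → EuclideanSpace ℝ (Fin 3)) (k : Fin 3) :
    (∑ i, f i) k = ∑ i, f i k := by
  classical
  induction (Finset.univ : Finset (Fin N)) using Finset.induction with
  | empty => simp
  | insert _ _ h ih => rw [Finset.sum_insert h, Finset.sum_insert h, PiLp.add_apply, ih]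

lemma blochOp_zero : blochOp 0 = 0 := by
  simpa using blochOp_smul 0 0

/-- Sufficiency of the geometric KKT conditions: the guessing probability is
`q 0 + r 0`, attained by the POVM `M i = p i • (1 - w i ⬝ σ)`. -/
theorem geomKKT_sufficiency (N : ℕ) (hN : 0 < N)
    (q : Fin N → ℝ) (hq : IsPriors q) (hqa : Antitone q)
    (v : Fin N → EuclideanSpace ℝ (Fin 3)) (hv : ∀ i, ‖v i‖ ≤ 1)
    (r : Fin N → ℝ) (w : Fin N → EuclideanSpace ℝ (Fin 3))
    (hr : ∀ i, 0 ≤ r i) (hkkt : GeomKKT q v r w) :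
    IsGreatest {x | ∃ M : Fin N → Matrix (Fin 2) (Fin 2) ℂ, IsPOVM M ∧ succProb q v M = x}
      (q ⟨0, hN⟩ + r ⟨0, hN⟩) ∧
    ∀ p : Fin N → ℝ, (∀ i, 0 < p i) → (∑ i, p i = 1) → (∑ i, p i • w i = 0) →
      IsPOVM (fun i => (p i : ℂ) • (1 - blochOp (w i))) ∧
      succProb q v (fun i => (p i : ℂ) • (1 - blochOp (w i))) = q ⟨0, hN⟩ + r ⟨0, hN⟩ := by
  obtain ⟨hkkt1, ⟨p0, hp0, hp0s, hp0w⟩, hkkt3, hkkt4⟩ := hkkt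
  set i0 : Fin N := ⟨0, hN⟩ with hi0
  have hwsq : ∀ i, w i 0 ^ 2 + w i 1 ^ 2 + w i 2 ^ 2 = 1 := fun i => norm_sq_eq _ (hkkt3 i)
  have hlam : ∀ i, q i + r i = q i0 + r i0 := by
    intro i; have := hkkt4 i i0; linarith
  have hcvec : ∀ i, q i • v i + r i • w i = q i0 • v i0 + r i0 • w i0 := by
    intro i
    have h := hkkt1 i i0
    rw [sub_eq_sub_iff_add_eq_add] at h
    rw [add_comm]
    exact h
  have hcomp : ∀ i k, q i * v i k + r i * w i k = q i0 * v i0 k + r i0 * w i0 k := by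
    intro i k
    have h := congrArg (· k) (hcvec i)
    simpa [PiLp.add_apply, PiLp.smul_apply] using h
  -- Part 1: the candidate measurements are POVMs
  have hPOVM : ∀ p : Fin N → ℝ, (∀ i, 0 < p i) → (∑ i, p i = 1) → (∑ i, p i • w i = 0) →
      IsPOVM (fun i => (p i : ℂ) • (1 - blochOp (w i))) := by
    intro p hp hps hpw
    constructor
    · intro i; exact psd_helper (w i) (hwsq i) (hp i).le
    · have h1 : ∀ i, (p i : ℂ) • ((1 : Matrix (Fin 2) (Fin 2) ℂ) - blochOp (w i))
          = (p i : ℂ) • (1 : Matrix (Fin 2) (Fin 2) ℂ) - blochOp (p i • w i) := by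
        intro i; rw [blochOp_smul, smul_sub]
      simp_rw [h1]
      rw [Finset.sum_sub_distrib, ← Finset.sum_smul, ← blochOp_sum, hpw, blochOp_zero, sub_zero]
      have : (∑ i, (p i : ℂ)) = ((∑ i, p i : ℝ) : ℂ) := by push_cast; rfl
      rw [this, hps]
      simp
  -- Part 2: the candidate measurements attain the value
  have hval : ∀ p : Fin N → ℝ, (∀ i, 0 < p i) → (∑ i, p i = 1) → (∑ i, p i • w i = 0) →
      succProb q v (fun i => (p i : ℂ) • (1 - blochOp (w i))) = q i0 + r i0 := by
    intro p hp hps hpw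
    have hwcomp : ∀ k, (∑ i, p i * w i k) = 0 := by
      intro k
      have h := congrArg (· k) hpw
      rw [euclid_sum_apply] at h
      simpa [PiLp.smul_apply] using h
    unfold succProb
    simp only [trace_state_povm]
    have key : ∀ i, q i * (p i * (1 - (v i 0 * w i 0 + v i 1 * w i 1 + v i 2 * w i 2)))
        = p i * (q i0 + r i0)
          - ((q i0 * v i0 0 + r i0 * w i0 0) * (p i * w i 0)
           + (q i0 * v i0 1 + r i0 * w i0 1) * (p i * w i 1)
           + (q i0 * v i0 2 + r i0 * w i0 2) * (p i * w i 2)) := by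
      intro i
      have h0 := hcomp i 0
      have h1 := hcomp i 1
      have h2 := hcomp i 2
      have hn := hwsq i
      have hl := hlam i
      linear_combination (-(p i * w i 0)) * h0 + (-(p i * w i 1)) * h1 + (-(p i * w i 2)) * h2
        + (p i * r i) * hn + (p i) * hl
    rw [Finset.sum_congr rfl (fun i _ => key i), Finset.sum_sub_distrib]
    rw [Finset.sum_add_distrib, Finset.sum_add_distrib]
    rw [← Finset.mul_sum, ← Finset.mul_sum, ← Finset.mul_sum, ← Finset.sum_mul]
    rw [hwcomp 0, hwcomp 1, hwcomp 2, hps]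
    ring
  -- Part 3: upper bound for every POVM
  have hub : ∀ M : Fin N → Matrix (Fin 2) (Fin 2) ℂ, IsPOVM M →
      succProb q v M ≤ q i0 + r i0 := by
    rintro M ⟨hMpsd, hMsum⟩
    set cv : EuclideanSpace ℝ (Fin 3) := q i0 • v i0 + r i0 • w i0 with hcv
    set Y : Matrix (Fin 2) (Fin 2) ℂ :=
      (((q i0 + r i0) / 2 : ℝ) : ℂ) • 1 + (1 / 2 : ℂ) • blochOp cv with hY
    have hYi : ∀ i, (q i : ℂ) • qubitState (v i)
        + ((r i / 2 : ℝ) : ℂ) • (1 + blochOp (w i)) = Y := by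
      intro i
      rw [state_decomp (q i) (r i) (v i) (w i), hcvec i, hlam i]
    have hterm : ∀ i, q i * (Matrix.trace (qubitState (v i) * M i)).re
        ≤ (Matrix.trace (Y * M i)).re := by
      intro i
      have hS : (((r i / 2 : ℝ) : ℂ) • (1 + blochOp (w i))).PosSemidef := by
        have h1 : (1 : Matrix (Fin 2) (Fin 2) ℂ) + blochOp (w i) = 1 - blochOp (-(w i)) := by
          rw [blochOp_neg, sub_neg_eq_add]
        rw [h1]
        apply psd_helper
        · have := hwsq i
          simp only [PiLp.neg_apply, neg_sq]
          linarith
        · linarith [hr i]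
      have h1 : (Matrix.trace (Y * M i)).re
          = q i * (Matrix.trace (qubitState (v i) * M i)).re
            + (Matrix.trace ((((r i / 2 : ℝ) : ℂ) • (1 + blochOp (w i))) * M i)).re := by
        rw [← hYi i, Matrix.add_mul, Matrix.trace_add, Complex.add_re, Matrix.smul_mul,
          Matrix.trace_smul]
        congr 1
        simp [Complex.mul_re]
      have h2 := trace_mul_re_nonneg hS (hMpsd i)
      linarith
    calc succProb q v M
        ≤ ∑ i, (Matrix.trace (Y * M i)).re := Finset.sum_le_sum (fun i _ => hterm i)
      _ = (Matrix.trace (Y * ∑ i, M i)).re := by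
          rw [Finset.mul_sum, Matrix.trace_sum, Complex.re_sum]
      _ = (Matrix.trace Y).re := by rw [hMsum, mul_one]
      _ = q i0 + r i0 := by
          rw [hY, Matrix.trace_add, Matrix.trace_smul, Matrix.trace_smul, Matrix.trace_one,
            blochOp_trace]
          simp
  refine ⟨⟨⟨fun i => (p0 i : ℂ) • (1 - blochOp (w i)), hPOVM p0 hp0 hp0s hp0w,
      hval p0 hp0 hp0s hp0w⟩, ?_⟩, fun p a b c => ⟨hPOVM p a b c, hval p a b c⟩⟩
  rintro x ⟨M, hM, rfl⟩
  exact hub M hM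
end

section
/- Key algebraic identity (Eq. (12)): Let N ≥ 1, let q : Fin N → ℝ be priors, and let v : Fin N → EuclideanSpace ℝ (Fin 3). Suppose r : Fin N → ℝ with r i ≥ 0 and w : Fin N → EuclideanSpace ℝ (Fin 3) satisfy the geometric KKT conditions for (q, v), and let p : Fin N → ℝ be a witness of condition (ii) (p i > 0 for all i, ∑ i, p i = 1, ∑ i, p i • w i = 0). Then ∑ i, q i * p i * (1 − ⟪v i, w i⟫) = q 0 + r 0, where ⟪·,·⟫ denotes the real inner product on EuclideanSpace ℝ (Fin 3). -/
open Matrix Complex Finset RealInnerProductSpace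
open scoped ComplexOrder

/-- Key algebraic identity (Eq. (12)):
`∑ i, q i * p i * (1 - ⟪v i, w i⟫) = q 0 + r 0`. -/
theorem key_identity (N : ℕ) (hN : 0 < N)
    (q : Fin N → ℝ) (hq : IsPriors q)
    (v : Fin N → EuclideanSpace ℝ (Fin 3))
    (r : Fin N → ℝ) (w : Fin N → EuclideanSpace ℝ (Fin 3))
    (hr : ∀ i, 0 ≤ r i) (hkkt : GeomKKT q v r w)
    (p : Fin N → ℝ) (hp : ∀ i, 0 < p i) (hp1 : ∑ i, p i = 1)
    (hpw : ∑ i, p i • w i = 0) :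
    ∑ i, q i * p i * (1 - ⟪v i, w i⟫) = q ⟨0, hN⟩ + r ⟨0, hN⟩ := by
  obtain ⟨h1, _, hw, h4⟩ := hkkt
  set i0 : Fin N := ⟨0, hN⟩
  set c : EuclideanSpace ℝ (Fin 3) := r i0 • w i0 + q i0 • v i0 with hc
  have hqv : ∀ i, q i • v i = c - r i • w i := by
    intro i
    have := h1 i i0
    rw [hc]; linear_combination (norm := module) this
  have hterm : ∀ i, q i * p i * (1 - ⟪v i, w i⟫) = p i * (q i + r i) - p i * ⟪c, w i⟫ := by
    intro i
    have h2 : ⟪q i • v i, w i⟫ = ⟪c, w i⟫ - r i * ⟪w i, w i⟫ := by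
      rw [hqv i, inner_sub_left, inner_smul_left]
      simp [RCLike.conj_to_real]
    have h3 : ⟪w i, w i⟫ = (1:ℝ) := by
      rw [real_inner_self_eq_norm_sq, hw i]; norm_num
    have h5 : q i * ⟪v i, w i⟫ = ⟪c, w i⟫ - r i := by
      have := h2
      rw [inner_smul_left, h3] at this
      simpa [RCLike.conj_to_real] using this
    linear_combination (-p i) * h5
  have hsum : ∀ i, q i + r i = q i0 + r i0 := by
    intro i; have := h4 i i0; linarith
  calc ∑ i, q i * p i * (1 - ⟪v i, w i⟫)
      = ∑ i, (p i * (q i0 + r i0) - p i * ⟪c, w i⟫) := by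
        apply Finset.sum_congr rfl; intro i _; rw [hterm i, hsum i]
    _ = (∑ i, p i) * (q i0 + r i0) - ⟪c, ∑ i, p i • w i⟫ := by
        rw [Finset.sum_sub_distrib, ← Finset.sum_mul, inner_sum]
        simp [inner_smul_right, mul_comm]
    _ = q i0 + r i0 := by rw [hp1, hpw, inner_zero_right]; ring
end

section
/- Rank-one structure from complementary slackness (Eq. (11)): Let w ∈ EuclideanSpace ℝ (Fin 3) with ‖w‖ ≤ 1, and let M ∈ Matrix (Fin 2) (Fin 2) ℂ be positive semidefinite with M ≠ 0. If Re(Matrix.trace (ρ(w) * M)) = 0, then ‖w‖ = 1 and there exists a real number p > 0 such that M = p • (1 − (w 0 • σ₁ + w 1 • σ₂ + w 2 • σ₃)). -/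
set_option maxHeartbeats 2000000


open Matrix Complex Finset RealInnerProductSpace
open scoped ComplexOrder

lemma key (a b c A D x y : ℝ) (hn : a^2+b^2+c^2 ≤ 1) (hA : 0 ≤ A) (hD : 0 ≤ D)
    (hdet : x^2 + y^2 ≤ A*D) (hpos : 0 < A + D)
    (htr : (1+c)*A + (1-c)*D + 2*(a*x - b*y) = 0) :
    a^2+b^2+c^2 = 1 ∧ A = (A+D)/2*(1-c) ∧ D = (A+D)/2*(1+c) ∧
      x = -((A+D)/2*a) ∧ y = (A+D)/2*b := by
  have hc1 : c^2 ≤ 1 := by nlinarith [sq_nonneg a, sq_nonneg b]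
  have hab : a^2+b^2 ≤ 1 - c^2 := by nlinarith
  have habnn : (0:ℝ) ≤ a^2+b^2 := by positivity
  have hxynn : (0:ℝ) ≤ x^2+y^2 := by positivity
  have h1 : (a*x - b*y)^2 ≤ (a^2+b^2)*(x^2+y^2) := by nlinarith [sq_nonneg (a*y+b*x)]
  have h2 : (a^2+b^2)*(x^2+y^2) ≤ (1-c^2)*(A*D) :=
    mul_le_mul hab hdet hxynn (by nlinarith)
  have h3 : ((1+c)*A + (1-c)*D)^2 = 4*(a*x - b*y)^2 := by
    linear_combination ((1+c)*A + (1-c)*D - 2*(a*x-b*y)) * htr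
  have h4 : ((1+c)*A - (1-c)*D)^2 ≤ 0 := by nlinarith
  have heq : (1+c)*A = (1-c)*D := by nlinarith [sq_nonneg ((1+c)*A - (1-c)*D)]
  have hAp : A = (A+D)/2*(1-c) := by linear_combination heq/2
  have hDp : D = (A+D)/2*(1+c) := by linear_combination (-1/2)*heq
  have hADnn : 0 ≤ A*D := mul_nonneg hA hD
  rcases hADnn.eq_or_lt with hAD | hAD
  · -- A*D = 0
    have hxy0 : x^2+y^2 ≤ 0 := by linarith
    have hx0 : x = 0 := by
      have hx2 : x^2 = 0 := le_antisymm (by linarith [sq_nonneg y]) (sq_nonneg x)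
      exact pow_eq_zero_iff two_ne_zero |>.mp hx2
    have hy0 : y = 0 := by
      have hy2 : y^2 = 0 := le_antisymm (by linarith [sq_nonneg x]) (sq_nonneg y)
      exact pow_eq_zero_iff two_ne_zero |>.mp hy2
    rcases mul_eq_zero.mp hAD.symm with hA0 | hD0
    · have hDpos : 0 < D := by linarith
      have hc : c = 1 := by
        have h5 : (1-c)*D = 0 := by linear_combination htr - (1+c)*hA0 - 2*a*hx0 + 2*b*hy0
        rcases mul_eq_zero.mp h5 with h | h
        · linarith
        · linarith
      have ha : a = 0 := by nlinarith
      have hb : b = 0 := by nlinarith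
      subst ha hb hc hx0 hy0 hA0
      norm_num
    · have hApos : 0 < A := by linarith
      have hc : c = -1 := by
        have h5 : (1+c)*A = 0 := by linear_combination htr - (1-c)*hD0 - 2*a*hx0 + 2*b*hy0
        rcases mul_eq_zero.mp h5 with h | h
        · linarith
        · linarith
      have ha : a = 0 := by nlinarith
      have hb : b = 0 := by nlinarith
      subst ha hb hc hx0 hy0 hD0
      norm_num
  · -- 0 < A*D
    have h7 : ((1+c)*A+(1-c)*D)^2 = 4*(1-c^2)*(A*D) := by
      linear_combination ((1+c)*A - (1-c)*D)*heq
    have h8 : (1-c^2)*(A*D) = (a*x-b*y)^2 := by linear_combination (h3 - h7)/4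
    have e1 : (a^2+b^2)*(x^2+y^2) = (1-c^2)*(A*D) := by
      refine le_antisymm h2 ?_
      linarith [h1]
    have hs : a^2+b^2 = 1-c^2 := by
      have hs1 : (1-c^2-(a^2+b^2))*(A*D) ≤ 0 := by
        nlinarith [mul_le_mul_of_nonneg_left hdet habnn, e1]
      have hle : 1 - c^2 - (a^2+b^2) ≤ 0 := by
        rcases lt_or_ge (1 - c^2 - (a^2+b^2)) 0 with h | h
        · linarith
        · nlinarith
      linarith
    have habpos : 0 < a^2 + b^2 := by
      rcases habnn.eq_or_lt with h0 | h0
      · exfalso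
        have hcc : (1-c)*(1+c) = 0 := by nlinarith
        rcases mul_eq_zero.mp hcc with h | h
        · have hc : c = 1 := by linarith
          have : A = 0 := by subst hc; linarith [heq]
          nlinarith
        · have hc : c = -1 := by linarith
          have : D = 0 := by subst hc; linarith [heq]
          nlinarith
      · exact h0
    have e2 : (a*x-b*y)^2 = (a^2+b^2)*(x^2+y^2) := by
      linear_combination -h8 - e1
    have e0sq : (a*y+b*x)^2 = 0 := by linear_combination -e2
    have e0 : a*y + b*x = 0 := by
      exact pow_eq_zero_iff two_ne_zero |>.mp e0sq
    have e3 : a*x - b*y = -((A+D)/2)*(a^2+b^2) := by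
      linear_combination htr/2 + (A+D)/2*hs - c/2*heq
    have hx : x = -((A+D)/2*a) := by
      have h6 : (a^2+b^2) * (x + (A+D)/2*a) = 0 := by linear_combination a*e3 + b*e0
      rcases mul_eq_zero.mp h6 with h | h
      · linarith
      · linarith
    have hy : y = (A+D)/2*b := by
      have h6 : (a^2+b^2) * (y - (A+D)/2*b) = 0 := by linear_combination -b*e3 + a*e0
      rcases mul_eq_zero.mp h6 with h | h
      · linarith
      · linarith
    exact ⟨by linarith, hAp, hDp, hx, hy⟩

/-- Rank-one structure from complementary slackness (Eq. (11)). -/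
theorem rank_one_structure (w : EuclideanSpace ℝ (Fin 3)) (hw : ‖w‖ ≤ 1)
    (M : Matrix (Fin 2) (Fin 2) ℂ) (hM : M.PosSemidef) (hM0 : M ≠ 0)
    (htr : (Matrix.trace (qubitState w * M)).re = 0) :
    ‖w‖ = 1 ∧ ∃ p : ℝ, 0 < p ∧ M = (p : ℂ) • (1 - blochOp w) := by
  set a := w 0 with ha'
  set b := w 1 with hb'
  set c := w 2 with hc'
  set A := (M 0 0).re with hA'
  set D := (M 1 1).re with hD'
  set x := (M 0 1).re with hx'
  set y := (M 0 1).im with hy'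
  have h10 : M 1 0 = (starRingEnd ℂ) (M 0 1) := (hM.1.apply 1 0).symm
  have h00 := hM.dotProduct_mulVec_nonneg ![1, 0]
  simp [dotProduct, mulVec, Fin.sum_univ_two, Complex.le_def] at h00
  obtain ⟨hA0, h00im⟩ := h00
  have h11 := hM.dotProduct_mulVec_nonneg ![0, 1]
  simp [dotProduct, mulVec, Fin.sum_univ_two, Complex.le_def] at h11
  obtain ⟨hD0, h11im⟩ := h11
  have h00im' : (M 0 0).im = 0 := h00im.symm
  have h11im' : (M 1 1).im = 0 := h11im.symm
  have hq : ∀ t : ℝ, 0 ≤ A*(t*t) + 2*(x^2+y^2)*t + D*(x^2+y^2) := by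
    intro t
    have h := hM.dotProduct_mulVec_nonneg ![(t:ℂ), (starRingEnd ℂ) (M 0 1)]
    simp [dotProduct, mulVec, Fin.sum_univ_two, Complex.le_def, h10] at h
    obtain ⟨h1, -⟩ := h
    rw [h11im'] at h1
    nlinarith [h1]
  have hxynn : (0:ℝ) ≤ x^2+y^2 := by positivity
  have hd : (2*(x^2+y^2))^2 - 4*A*(D*(x^2+y^2)) ≤ 0 := by
    simpa [discrim] using discrim_le_zero hq
  have hdet : x^2+y^2 ≤ A*D := by
    rcases hxynn.eq_or_lt with h0 | h0
    · rw [← h0]; exact mul_nonneg hA0 hD0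
    · nlinarith [hd, h0]
  rw [Matrix.trace_fin_two] at htr
  simp [Matrix.mul_apply, Fin.sum_univ_two, qubitState, blochOp, pauli1, pauli2, pauli3,
    Matrix.one_apply, h10, Complex.add_re, Complex.mul_re] at htr
  have htr' : (1+c)*A + (1-c)*D + 2*(a*x - b*y) = 0 := by
    ring_nf at htr ⊢
    linarith [htr]
  have hnorm : ‖w‖^2 = a^2+b^2+c^2 := by
    rw [EuclideanSpace.norm_eq, Real.sq_sqrt (by positivity)]
    simp [Fin.sum_univ_three, Real.norm_eq_abs, sq_abs]
    rfl
  have hn : a^2+b^2+c^2 ≤ 1 := by nlinarith [norm_nonneg w, hnorm]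
  have hpos : 0 < A + D := by
    rcases (add_nonneg hA0 hD0).eq_or_lt with h0 | h0
    · exfalso
      apply hM0
      have hAz : A = 0 := by linarith
      have hDz : D = 0 := by linarith
      have hx0 : x = 0 := by nlinarith [sq_nonneg x, sq_nonneg y]
      have hy0 : y = 0 := by nlinarith [sq_nonneg x, sq_nonneg y]
      have h01 : M 0 1 = 0 := Complex.ext (by simpa using hx0) (by simpa using hy0)
      ext i j
      fin_cases i <;> fin_cases j
      · exact Complex.ext (by simpa using hAz) (by simpa using h00im')
      · simpa using h01
      · simp [h10, h01]
      · exact Complex.ext (by simpa using hDz) (by simpa using h11im')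
    · exact h0
  obtain ⟨k1, k2, k3, k4, k5⟩ := key a b c A D x y hn hA0 hD0 hdet hpos htr'
  constructor
  · rw [← Real.sqrt_sq (norm_nonneg w), hnorm, k1, Real.sqrt_one]
  · refine ⟨(A+D)/2, by linarith, ?_⟩
    have h01 : M 0 1 = Complex.mk x y := rfl
    ext i j
    fin_cases i <;> fin_cases j
    · apply Complex.ext <;>
        simp [blochOp, pauli1, pauli2, pauli3, Matrix.one_apply, Complex.ext_iff,
          h00im', Complex.mul_re, Complex.mul_im] <;> linarith [k2]
    · apply Complex.ext <;>
        simp [blochOp, pauli1, pauli2, pauli3, Matrix.one_apply,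
          Complex.mul_re, Complex.mul_im] <;> linarith [k4, k5]
    · show M 1 0 = (((((A+D)/2 : ℝ)) : ℂ) • (1 - blochOp w)) 1 0
      rw [h10]
      apply Complex.ext <;>
        simp [blochOp, pauli1, pauli2, pauli3, Matrix.one_apply,
          Complex.mul_re, Complex.mul_im] <;> linarith [k4, k5]
    · apply Complex.ext <;>
        simp [blochOp, pauli1, pauli2, pauli3, Matrix.one_apply,
          h11im', Complex.mul_re, Complex.mul_im] <;> linarith [k3]
end

section
/- Corollary 2 (two extreme points, value): Let N ≥ 2, let q : Fin N → ℝ be priors with q antitone, and let v : Fin N → EuclideanSpace ℝ (Fin 3) with ‖v i‖ ≤ 1. Suppose there are indices a, b with q a • v a ≠ q b • v b such that for every i, the point q i • v i lies on the segment joining q a • v a and q b • v b (the polytope P{q i • v i} has exactly two extreme points). Then the greatest element of the set of success probabilities {P(M) : M an N-outcome POVM} equals max over pairs i ≠ j of (1/2) * (q i + q j + max (‖q i • v i − q j • v j‖) (|q i − q j|)). -/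
open Matrix Complex Finset RealInnerProductSpace
open scoped ComplexOrder

/-! ### Auxiliary lemmas -/

noncomputable def genM (α a b c : ℝ) : Matrix (Fin 2) (Fin 2) ℂ :=
  !![(α : ℂ) + (c : ℂ), (a : ℂ) - (b : ℂ) * Complex.I;
     (a : ℂ) + (b : ℂ) * Complex.I, (α : ℂ) - (c : ℂ)]

lemma genM_smul (r α a b c : ℝ) :
    (r : ℂ) • genM α a b c = genM (r*α) (r*a) (r*b) (r*c) := by
  ext i j
  fin_cases i <;> fin_cases j <;>
    simp [genM, Matrix.smul_apply] <;> push_cast <;> ring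

lemma genM_one : genM 1 0 0 0 = 1 := by
  ext i j
  fin_cases i <;> fin_cases j <;> simp [genM, Matrix.one_apply]

lemma genM_add (α a b c α' a' b' c' : ℝ) :
    genM α a b c + genM α' a' b' c' = genM (α+α') (a+a') (b+b') (c+c') := by
  ext i j
  fin_cases i <;> fin_cases j <;> simp [genM] <;> push_cast <;> ring

lemma genM_sub (α a b c α' a' b' c' : ℝ) :
    genM α a b c - genM α' a' b' c' = genM (α-α') (a-a') (b-b') (c-c') := by
  ext i j
  fin_cases i <;> fin_cases j <;> simp [genM] <;> push_cast <;> ring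

lemma qubitState_eq (v : EuclideanSpace ℝ (Fin 3)) :
    qubitState v = genM (1/2) (v 0 / 2) (v 1 / 2) (v 2 / 2) := by
  rw [qubitState]
  ext i j
  fin_cases i <;> fin_cases j <;>
    simp [genM, blochOp, pauli1, pauli2, pauli3, Matrix.one_apply] <;> push_cast <;> ring

lemma trace_genM (α a b c : ℝ) : Matrix.trace (genM α a b c) = ((2*α : ℝ) : ℂ) := by
  simp [Matrix.trace, genM, Fin.sum_univ_two]
  push_cast; ring

lemma trace_genM_mul (α a b c α' a' b' c' : ℝ) :
    Matrix.trace (genM α a b c * genM α' a' b' c') =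
      ((2*(α*α' + a*a' + b*b' + c*c') : ℝ) : ℂ) := by
  simp [Matrix.trace, Matrix.mul_apply, genM, Fin.sum_univ_two]
  push_cast
  ring_nf
  rw [Complex.I_sq]
  ring

lemma genM_isHermitian (α a b c : ℝ) : (genM α a b c).IsHermitian := by
  unfold Matrix.IsHermitian
  ext i j
  fin_cases i <;> fin_cases j <;>
    simp [genM, Matrix.conjTranspose_apply, Complex.ext_iff]

lemma genM_posSemidef (α a b c : ℝ) (hα : 0 ≤ α) (h : a^2 + b^2 + c^2 ≤ α^2) :
    (genM α a b c).PosSemidef := by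
  refine Matrix.PosSemidef.of_dotProduct_mulVec_nonneg (genM_isHermitian α a b c) fun x => ?_
  rw [Complex.nonneg_iff]
  set p := (x 0).re; set q := (x 0).im; set r := (x 1).re; set s := (x 1).im
  have hx0 : x 0 = ⟨p, q⟩ := rfl
  have hx1 : x 1 = ⟨r, s⟩ := rfl
  constructor
  · simp [dotProduct, Matrix.mulVec, genM, Fin.sum_univ_two, hx0, hx1,
      Complex.add_re, Complex.mul_re, Complex.mul_im]
    ring_nf
    have hcα : -α ≤ c := by
      nlinarith [sq_nonneg a, sq_nonneg b, sq_nonneg (α - c), sq_nonneg (α + c)]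
    rcases eq_or_lt_of_le hcα with hc | hc
    · have hc' : c = -α := by linarith
      have hab : a = 0 ∧ b = 0 := by constructor <;> nlinarith [sq_nonneg a, sq_nonneg b]
      obtain ⟨ha0, hb0⟩ := hab
      subst ha0; subst hb0; subst hc'
      nlinarith [sq_nonneg r, sq_nonneg s]
    · have key : (α + c) * ((α+c)*(p^2+q^2) + (α-c)*(r^2+s^2) + 2*(a*(p*r+q*s) + b*(p*s-q*r)))
          = ((α+c)*p + a*r + b*s)^2 + ((α+c)*q + a*s - b*r)^2
            + (α^2 - a^2 - b^2 - c^2)*(r^2+s^2) := by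
        ring
      nlinarith [sq_nonneg ((α+c)*p + a*r + b*s), sq_nonneg ((α+c)*q + a*s - b*r),
        sq_nonneg r, sq_nonneg s,
        mul_pos (show (0:ℝ) < α + c by linarith) (show (0:ℝ) < α + c by linarith)]
  · simp [dotProduct, Matrix.mulVec, genM, Fin.sum_univ_two, hx0, hx1,
      Complex.add_im, Complex.mul_re, Complex.mul_im]
    ring

lemma psd_diag_nonneg {n : Type*} [Fintype n] [DecidableEq n] {A : Matrix n n ℂ}
    (hA : A.PosSemidef) (i : n) : 0 ≤ A i i := by
  have := hA.dotProduct_mulVec_nonneg (Pi.single i 1)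
  simpa [dotProduct, Matrix.mulVec, Pi.single_apply] using this

lemma psd_trace_re_nonneg {n : Type*} [Fintype n] [DecidableEq n] {A B : Matrix n n ℂ}
    (hA : A.PosSemidef) (hB : B.PosSemidef) : 0 ≤ (Matrix.trace (A * B)).re := by
  obtain ⟨C, rfl⟩ : ∃ C : Matrix n n ℂ, B = Cᴴ * C := by
    open scoped MatrixOrder in
    obtain ⟨C, hC⟩ := CStarAlgebra.nonneg_iff_eq_star_mul_self.mp hB.nonneg
    exact ⟨C, hC⟩
  have h1 : Matrix.trace (A * (Cᴴ * C)) = Matrix.trace (C * A * Cᴴ) := by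
    rw [← Matrix.mul_assoc, Matrix.trace_mul_cycle]
  rw [h1]
  have h2 : (C * A * Cᴴ).PosSemidef := hA.mul_mul_conjTranspose_same C
  have h3 : 0 ≤ Matrix.trace (C * A * Cᴴ) :=
    Finset.sum_nonneg fun i _ => psd_diag_nonneg h2 i
  exact (Complex.le_def.mp h3).1

lemma norm_sq_eu (w : EuclideanSpace ℝ (Fin 3)) : ‖w‖^2 = w 0^2 + w 1^2 + w 2^2 := by
  rw [EuclideanSpace.norm_eq, Real.sq_sqrt (by positivity)]
  simp [Fin.sum_univ_three, Real.norm_eq_abs, sq_abs]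

set_option maxHeartbeats 1000000 in
/-- Corollary 2 (two extreme points, value): if the polytope `P{q i • v i}` is a
segment with extreme points indexed by `a, b`, the guessing probability equals the
maximum over pairs `i ≠ j` of `(1/2)(q i + q j + ‖q i ρ i - q j ρ j‖₁)`. -/
theorem corollary_two_extreme_points (N : ℕ) (hN : 2 ≤ N)
    (q : Fin N → ℝ) (hq : IsPriors q) (hqa : Antitone q)
    (v : Fin N → EuclideanSpace ℝ (Fin 3)) (hv : ∀ i, ‖v i‖ ≤ 1)
    (a b : Fin N) (hab : q a • v a ≠ q b • v b)
    (hseg : ∀ i, q i • v i ∈ segment ℝ (q a • v a) (q b • v b)) :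
    ∃ g : ℝ,
      IsGreatest {x | ∃ M : Fin N → Matrix (Fin 2) (Fin 2) ℂ, IsPOVM M ∧ succProb q v M = x} g ∧
      IsGreatest {x | ∃ i j : Fin N, i ≠ j ∧
        x = (1 / 2) * (q i + q j + max ‖q i • v i - q j • v j‖ |q i - q j|)} g := by
  classical
  obtain ⟨hq0, _hq1⟩ := hq
  have hNpos : 0 < N := by omega
  set x : Fin N → EuclideanSpace ℝ (Fin 3) := fun i => q i • v i with hxdef
  have hxco : ∀ i k, x i k = q i * v i k := by
    intro i k; simp [hxdef]
  let i0 : Fin N := ⟨0, by omega⟩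
  let i1 : Fin N := ⟨1, by omega⟩
  have h01 : i0 ≠ i1 := by simp [i0, i1, Fin.ext_iff]
  set f : Fin N × Fin N → ℝ := fun p =>
    (1 / 2) * (q p.1 + q p.2 + max ‖q p.1 • v p.1 - q p.2 • v p.2‖ |q p.1 - q p.2|) with hfdef
  set T : Finset (Fin N × Fin N) := Finset.univ.filter (fun p => p.1 ≠ p.2) with hTdef
  have hTne : T.Nonempty := ⟨(i0, i1), by simp [hTdef, h01]⟩
  obtain ⟨p0, hp0T, hp0max⟩ := T.exists_max_image f hTne
  have hne : p0.1 ≠ p0.2 := by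
    have := Finset.mem_filter.mp hp0T
    exact this.2
  set g : ℝ := f p0 with hgdef
  -- bounds from maximality
  have hpair : ∀ i j, i ≠ j →
      (1 / 2) * (q i + q j + max ‖q i • v i - q j • v j‖ |q i - q j|) ≤ g := by
    intro i j hij
    exact hp0max (i, j) (by simp [hTdef, hij])
  have hgq : ∀ i, q i ≤ g := by
    intro i
    set j := if i = i0 then i1 else i0 with hj
    have hij : i ≠ j := by
      by_cases h : i = i0
      · simpa [hj, h] using h01
      · simpa [hj, h] using h
    have h1 := hpair i j hij
    have h2 : q i - q j ≤ |q i - q j| := le_abs_self _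
    have h3 : |q i - q j| ≤ max ‖q i • v i - q j • v j‖ |q i - q j| := le_max_right _ _
    linarith
  have hgpair : ∀ i j, i ≠ j → q i + q j + ‖x i - x j‖ ≤ 2 * g := by
    intro i j hij
    have h1 := hpair i j hij
    have h3 : ‖x i - x j‖ ≤ max ‖q i • v i - q j • v j‖ |q i - q j| := le_max_left _ _
    linarith
  -- segment parametrization
  have hd : x b - x a ≠ 0 := sub_ne_zero.mpr (Ne.symm hab)
  set d : EuclideanSpace ℝ (Fin 3) := x b - x a with hddef
  set L : ℝ := ‖d‖ with hLdef
  have hL : 0 < L := norm_pos_iff.mpr hd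
  have hxt : ∀ i, ∃ t : ℝ, x i = x a + t • d := by
    intro i
    have h := hseg i
    rw [segment_eq_image'] at h
    obtain ⟨τ, _, hτ⟩ := h
    exact ⟨τ, hτ.symm⟩
  choose t ht using hxt
  have hdist : ∀ i j, ‖x i - x j‖ = |t i - t j| * L := by
    intro i j
    have : x i - x j = (t i - t j) • d := by
      rw [ht i, ht j]; module
    rw [this, norm_smul, Real.norm_eq_abs, hLdef]
  -- the one-center point
  set r : Fin N → ℝ := fun i => (g - q i) / L with hrdef
  have hr0 : ∀ i, 0 ≤ r i := by
    intro i
    have h := hgq i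
    exact div_nonneg (by linarith) hL.le
  obtain ⟨k, -, hk⟩ := Finset.exists_max_image Finset.univ (fun i => t i - r i)
    ⟨i0, Finset.mem_univ i0⟩
  set s : ℝ := t k - r k with hsdef
  have hsge : ∀ i, t i - r i ≤ s := fun i => hk i (Finset.mem_univ i)
  have hsle : ∀ j, s ≤ t j + r j := by
    intro j
    by_cases hkj : k = j
    · subst hkj
      have := hr0 k
      rw [hsdef]; linarith
    · have h1 := hgpair k j hkj
      rw [hdist k j] at h1
      have h2 : (t k - t j) * L ≤ |t k - t j| * L :=
        mul_le_mul_of_nonneg_right (le_abs_self _) hL.le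
      have h3 : (r k + r j) * L = 2 * g - q k - q j := by
        rw [hrdef]; field_simp; ring
      have h4 : (t k - t j) * L ≤ (r k + r j) * L := by linarith
      have h5 : t k - t j ≤ r k + r j := le_of_mul_le_mul_right h4 hL
      rw [hsdef]; linarith
  set z : EuclideanSpace ℝ (Fin 3) := x a + s • d with hzdef
  have hz : ∀ i, ‖z - x i‖ ≤ g - q i := by
    intro i
    have hzx : z - x i = (s - t i) • d := by
      rw [hzdef, ht i]; module
    rw [hzx, norm_smul, Real.norm_eq_abs, ← hLdef]
    have h1 : |s - t i| ≤ r i := by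
      rw [abs_le]
      constructor
      · have := hsge i; linarith
      · have := hsle i; linarith
    calc |s - t i| * L ≤ r i * L := mul_le_mul_of_nonneg_right h1 hL.le
      _ = g - q i := by rw [hrdef]; field_simp
  -- matrices
  set A : Fin N → Matrix (Fin 2) (Fin 2) ℂ :=
    fun i => genM (q i / 2) (x i 0 / 2) (x i 1 / 2) (x i 2 / 2) with hAdef
  set Y : Matrix (Fin 2) (Fin 2) ℂ :=
    genM (g / 2) (z 0 / 2) (z 1 / 2) (z 2 / 2) with hYdef
  have hAq : ∀ i, (q i : ℂ) • qubitState (v i) = A i := by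
    intro i
    rw [qubitState_eq, genM_smul, hAdef]
    have e0 : q i * (v i 0 / 2) = x i 0 / 2 := by rw [hxco i 0]; ring
    have e1 : q i * (v i 1 / 2) = x i 1 / 2 := by rw [hxco i 1]; ring
    have e2 : q i * (v i 2 / 2) = x i 2 / 2 := by rw [hxco i 2]; ring
    rw [e0, e1, e2, (by ring : q i * (1/2) = q i / 2)]
  have hYA : ∀ i, (Y - A i).PosSemidef := by
    intro i
    rw [hYdef, hAdef, genM_sub]
    apply genM_posSemidef
    · have := hgq i; linarith
    · have h1 := hz i
      have h2 := norm_sq_eu (z - x i)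
      simp only [PiLp.sub_apply] at h2
      have h3 : 0 ≤ ‖z - x i‖ := norm_nonneg _
      nlinarith [hgq i]
  -- upper bound for every POVM
  have hub : ∀ M : Fin N → Matrix (Fin 2) (Fin 2) ℂ, IsPOVM M → succProb q v M ≤ g := by
    intro M hM
    have hstep : ∀ i, q i * (Matrix.trace (qubitState (v i) * M i)).re
        ≤ (Matrix.trace (Y * M i)).re := by
      intro i
      have h1 : (Matrix.trace (((q i : ℂ) • qubitState (v i)) * M i)).re
          = q i * (Matrix.trace (qubitState (v i) * M i)).re := by
        rw [Matrix.smul_mul, Matrix.trace_smul]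
        simp [Complex.smul_re]
      have h2 := psd_trace_re_nonneg (hYA i) (hM.1 i)
      have h3 : Matrix.trace ((Y - A i) * M i)
          = Matrix.trace (Y * M i) - Matrix.trace (A i * M i) := by
        rw [Matrix.sub_mul, Matrix.trace_sub]
      rw [h3, Complex.sub_re] at h2
      rw [← h1, hAq i]
      linarith
    have hsum : succProb q v M ≤ ∑ i, (Matrix.trace (Y * M i)).re :=
      Finset.sum_le_sum fun i _ => hstep i
    have hYsum : ∑ i, (Matrix.trace (Y * M i)).re = g := by
      have h1 : ∑ i, Matrix.trace (Y * M i) = Matrix.trace (Y * ∑ i, M i) := by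
        rw [Finset.mul_sum, Matrix.trace_sum]
      have h2 : (∑ i, Matrix.trace (Y * M i)).re = ∑ i, (Matrix.trace (Y * M i)).re :=
        Complex.re_sum _ _
      rw [← h2, h1, hM.2, Matrix.mul_one, hYdef, trace_genM]
      simp
      ring
    rw [← hYsum]
    exact hsum
  -- achievability
  have hach : ∃ M : Fin N → Matrix (Fin 2) (Fin 2) ℂ, IsPOVM M ∧ succProb q v M = g := by
    have htriv : ∀ m : Fin N, g = q m →
        ∃ M : Fin N → Matrix (Fin 2) (Fin 2) ℂ, IsPOVM M ∧ succProb q v M = g := by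
      intro m hgm
      refine ⟨fun kk => if kk = m then 1 else 0, ⟨?_, ?_⟩, ?_⟩
      · intro i
        by_cases hi : i = m <;> simp [hi, Matrix.PosSemidef.one, Matrix.PosSemidef.zero]
      · simp [Finset.sum_ite_eq']
      · rw [succProb]
        have hterm : ∀ kk : Fin N,
            q kk * (Matrix.trace (qubitState (v kk) * if kk = m then 1 else 0)).re
              = if kk = m then q m else 0 := by
          intro kk
          by_cases hkk : kk = m
          · subst hkk
            rw [if_pos rfl, if_pos rfl, Matrix.mul_one, qubitState_eq, trace_genM]
            norm_num
          · rw [if_neg hkk, if_neg hkk, Matrix.mul_zero, Matrix.trace_zero]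
            simp
        rw [Finset.sum_congr rfl fun kk _ => hterm kk]
        rw [Finset.sum_ite_eq' Finset.univ m fun _ => q m]
        simp [hgm]
    set Δ : EuclideanSpace ℝ (Fin 3) := x p0.1 - x p0.2 with hΔdef
    by_cases hcase : ‖Δ‖ ≤ |q p0.1 - q p0.2|
    · -- trivial case
      have hmax : max ‖q p0.1 • v p0.1 - q p0.2 • v p0.2‖ |q p0.1 - q p0.2|
          = |q p0.1 - q p0.2| := max_eq_right hcase
      by_cases hpq : q p0.2 ≤ q p0.1
      · apply htriv p0.1
        rw [hgdef, hfdef]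
        simp only []
        rw [hmax, _root_.abs_of_nonneg (by linarith)]
        ring
      · apply htriv p0.2
        rw [hgdef, hfdef]
        simp only []
        rw [hmax, abs_of_nonpos (by linarith)]
        ring
    · -- Helstrom case
      push_neg at hcase
      set n : ℝ := ‖Δ‖ with hndef
      have hn0 : 0 < n := lt_of_le_of_lt (abs_nonneg _) hcase
      have hnsq : Δ 0 ^ 2 + Δ 1 ^ 2 + Δ 2 ^ 2 = n ^ 2 := (norm_sq_eu Δ).symm
      have hmax : max ‖q p0.1 • v p0.1 - q p0.2 • v p0.2‖ |q p0.1 - q p0.2| = n :=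
        max_eq_left hcase.le
      set P : Matrix (Fin 2) (Fin 2) ℂ :=
        genM (1/2) (Δ 0 / (2*n)) (Δ 1 / (2*n)) (Δ 2 / (2*n)) with hPdef
      set Q : Matrix (Fin 2) (Fin 2) ℂ :=
        genM (1/2) (-(Δ 0 / (2*n))) (-(Δ 1 / (2*n))) (-(Δ 2 / (2*n))) with hQdef
      have hquarter : (Δ 0 / (2*n))^2 + (Δ 1 / (2*n))^2 + (Δ 2 / (2*n))^2 = (1/2:ℝ)^2 := by
        field_simp
        linarith
      have hPpsd : P.PosSemidef := by
        rw [hPdef]; exact genM_posSemidef _ _ _ _ (by norm_num) (le_of_eq hquarter)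
      have hQpsd : Q.PosSemidef := by
        rw [hQdef]
        apply genM_posSemidef _ _ _ _ (by norm_num)
        have hneg : (-(Δ 0 / (2*n)))^2 + (-(Δ 1 / (2*n)))^2 + (-(Δ 2 / (2*n)))^2
            = (Δ 0 / (2*n))^2 + (Δ 1 / (2*n))^2 + (Δ 2 / (2*n))^2 := by ring
        rw [hneg]
        exact le_of_eq hquarter
      refine ⟨fun kk => if kk = p0.1 then P else if kk = p0.2 then Q else 0, ⟨?_, ?_⟩, ?_⟩
      · intro i
        by_cases h1 : i = p0.1
        · simp [h1, hPpsd]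
        · by_cases h2 : i = p0.2
          · subst h2
            simp [if_neg h1, hQpsd]
          · simp [h1, h2, Matrix.PosSemidef.zero]
      · have hsplit : ∀ kk : Fin N,
            (if kk = p0.1 then P else if kk = p0.2 then Q else 0)
              = (if kk = p0.1 then P else 0) + (if kk = p0.2 then Q else 0) := by
          intro kk
          by_cases h1 : kk = p0.1
          · have h2 : kk ≠ p0.2 := by rw [h1]; exact hne
            simp [h1, h2, hne]
          · by_cases h2 : kk = p0.2 <;> simp [h1, h2, hne, Ne.symm hne]
        rw [Finset.sum_congr rfl fun kk _ => hsplit kk, Finset.sum_add_distrib,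
          Finset.sum_ite_eq' Finset.univ p0.1 fun _ => P,
          Finset.sum_ite_eq' Finset.univ p0.2 fun _ => Q]
        simp only [Finset.mem_univ, if_pos]
        rw [hPdef, hQdef, genM_add]
        rw [(by norm_num : (1/2 : ℝ) + 1/2 = 1), (by ring : Δ 0 / (2*n) + -(Δ 0 / (2*n)) = 0),
          (by ring : Δ 1 / (2*n) + -(Δ 1 / (2*n)) = 0), (by ring : Δ 2 / (2*n) + -(Δ 2 / (2*n)) = 0)]
        exact genM_one
      · rw [succProb]
        have hterm : ∀ kk : Fin N,
            q kk * (Matrix.trace (qubitState (v kk) *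
              (if kk = p0.1 then P else if kk = p0.2 then Q else 0))).re
            = (if kk = p0.1 then q p0.1 * (1/2 + (v p0.1 0 * (Δ 0 / (2*n))
                + v p0.1 1 * (Δ 1 / (2*n)) + v p0.1 2 * (Δ 2 / (2*n)))) else 0)
              + (if kk = p0.2 then q p0.2 * (1/2 - (v p0.2 0 * (Δ 0 / (2*n))
                + v p0.2 1 * (Δ 1 / (2*n)) + v p0.2 2 * (Δ 2 / (2*n)))) else 0) := by
          intro kk
          by_cases h1 : kk = p0.1
          · have h2 : kk ≠ p0.2 := h1 ▸ hne
            subst h1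
            rw [if_pos rfl, if_pos rfl, if_neg h2, qubitState_eq, hPdef, trace_genM_mul]
            rw [Complex.ofReal_re]
            ring
          · by_cases h2 : kk = p0.2
            · subst h2
              rw [if_neg h1, if_pos rfl, if_neg h1, if_pos rfl, qubitState_eq, hQdef,
                trace_genM_mul, Complex.ofReal_re]
              ring
            · rw [if_neg h1, if_neg h2, if_neg h1, if_neg h2, Matrix.mul_zero,
                Matrix.trace_zero]
              simp
        rw [Finset.sum_congr rfl fun kk _ => hterm kk, Finset.sum_add_distrib,
          Finset.sum_ite_eq' Finset.univ p0.1, Finset.sum_ite_eq' Finset.univ p0.2]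
        simp only [Finset.mem_univ, if_pos]
        rw [hgdef, hfdef]
        simp only []
        rw [hmax]
        have e0 : q p0.1 * v p0.1 0 - q p0.2 * v p0.2 0 = Δ 0 := by
          rw [hΔdef]; have := hxco p0.1 0; have := hxco p0.2 0
          simp only [PiLp.sub_apply]
          rw [hxco p0.1 0, hxco p0.2 0]
        have e1 : q p0.1 * v p0.1 1 - q p0.2 * v p0.2 1 = Δ 1 := by
          simp only [hΔdef, PiLp.sub_apply]
          rw [hxco p0.1 1, hxco p0.2 1]
        have e2 : q p0.1 * v p0.1 2 - q p0.2 * v p0.2 2 = Δ 2 := by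
          simp only [hΔdef, PiLp.sub_apply]
          rw [hxco p0.1 2, hxco p0.2 2]
        have hdot : q p0.1 * (v p0.1 0 * Δ 0 + v p0.1 1 * Δ 1 + v p0.1 2 * Δ 2)
            - q p0.2 * (v p0.2 0 * Δ 0 + v p0.2 1 * Δ 1 + v p0.2 2 * Δ 2) = n^2 := by
          rw [← hnsq]; linear_combination Δ 0 * e0 + Δ 1 * e1 + Δ 2 * e2
        have hhalf : n^2 / (2*n) = n/2 := by
          rw [pow_two, mul_comm 2 n, mul_div_mul_left _ _ hn0.ne']
        calc q p0.1 * (1/2 + (v p0.1 0 * (Δ 0 / (2*n)) + v p0.1 1 * (Δ 1 / (2*n))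
              + v p0.1 2 * (Δ 2 / (2*n))))
            + q p0.2 * (1/2 - (v p0.2 0 * (Δ 0 / (2*n)) + v p0.2 1 * (Δ 1 / (2*n))
              + v p0.2 2 * (Δ 2 / (2*n))))
            = (q p0.1 + q p0.2) / 2
              + (q p0.1 * (v p0.1 0 * Δ 0 + v p0.1 1 * Δ 1 + v p0.1 2 * Δ 2)
                - q p0.2 * (v p0.2 0 * Δ 0 + v p0.2 1 * Δ 1 + v p0.2 2 * Δ 2)) / (2*n) := by
              ring
          _ = (q p0.1 + q p0.2) / 2 + n^2 / (2*n) := by rw [hdot]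
          _ = 1 / 2 * (q p0.1 + q p0.2 + n) := by rw [hhalf]; ring
  obtain ⟨M, hM, hMg⟩ := hach
  exact ⟨g, ⟨⟨M, hM, hMg⟩, fun xx ⟨MM, hMM, hMMx⟩ => hMMx ▸ hub MM hMM⟩,
    ⟨⟨p0.1, p0.2, hne, rfl⟩, fun xx ⟨i, j, hij, hx⟩ => hx ▸ hpair i j hij⟩⟩
end

section
/- Two-state discrimination, degenerate case: Let q : Fin 2 → ℝ be priors with q 0 ≥ q 1, and let v : Fin 2 → EuclideanSpace ℝ (Fin 3) with ‖v i‖ ≤ 1. If ‖q 0 • v 0 − q 1 • v 1‖ ≤ q 0 − q 1, then q 0 is the greatest element of the set of success probabilities {P(M) : M a 2-outcome POVM}; i.e., every 2-outcome POVM satisfies P(M) ≤ q 0 and this value is attained (by M 0 = 1, M 1 = 0). -/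
open Matrix Complex Finset RealInnerProductSpace
open scoped ComplexOrder

lemma psd_trace_nonneg {n : ℕ} {A : Matrix (Fin n) (Fin n) ℂ} (hA : A.PosSemidef) :
    0 ≤ A.trace := by
  rw [Matrix.trace]
  apply Finset.sum_nonneg
  intro i _
  have := hA.dotProduct_mulVec_nonneg (Pi.single i 1)
  simpa [Matrix.mulVec, dotProduct, Pi.single_apply, apply_ite (star : ℂ → ℂ),
    Finset.sum_ite_eq, Finset.sum_ite_eq'] using this

lemma psd_trace_mul_nonneg {n : ℕ} {A B : Matrix (Fin n) (Fin n) ℂ}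
    (hA : A.PosSemidef) (hB : B.PosSemidef) : 0 ≤ (A * B).trace := by
  open scoped MatrixOrder in obtain ⟨C, rfl⟩ := CStarAlgebra.nonneg_iff_eq_star_mul_self.mp hB.nonneg
  rw [← Matrix.mul_assoc, Matrix.trace_mul_cycle]
  exact psd_trace_nonneg (hA.mul_mul_conjTranspose_same C)

lemma half_smul_psd {M : Matrix (Fin 2) (Fin 2) ℂ} (h : M.PosSemidef) :
    ((1/2 : ℂ) • M).PosSemidef := by
  refine Matrix.PosSemidef.of_dotProduct_mulVec_nonneg ?_ ?_
  · have := h.1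
    rw [Matrix.IsHermitian] at *
    rw [Matrix.conjTranspose_smul, this]
    norm_num
  · intro c
    have h2 : (0:ℂ) ≤ 1/2 := by
      rw [Complex.le_def]; norm_num
    have := h.dotProduct_mulVec_nonneg c
    rw [Matrix.smul_mulVec, dotProduct_smul, smul_eq_mul]
    exact mul_nonneg h2 this

lemma key_psd (a x y z : ℝ) (ha : 0 ≤ a) (h : x^2 + y^2 + z^2 ≤ a^2) :
    (!![((a:ℂ) + z), (x:ℂ) - (y:ℂ)*Complex.I;
        (x:ℂ) + (y:ℂ)*Complex.I, (a:ℂ) - z]).PosSemidef := by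
  have hz2 : z^2 ≤ a^2 := by nlinarith [sq_nonneg x, sq_nonneg y]
  have haz1 : 0 ≤ a + z := by nlinarith [sq_nonneg (a+z)]
  have haz2 : 0 ≤ a - z := by nlinarith [sq_nonneg (a-z)]
  refine Matrix.PosSemidef.of_dotProduct_mulVec_nonneg ?_ ?_
  · rw [Matrix.IsHermitian]
    ext i j
    fin_cases i <;> fin_cases j <;>
      simp [Matrix.conjTranspose_apply, Complex.ext_iff]
  · intro c
    set p := (c 0).re with hp
    set q := (c 0).im with hq
    set r := (c 1).re with hr
    set s := (c 1).im with hs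
    have hE : star c ⬝ᵥ
        (!![((a:ℂ) + z), (x:ℂ) - (y:ℂ)*Complex.I;
            (x:ℂ) + (y:ℂ)*Complex.I, (a:ℂ) - z] *ᵥ c)
        = (((a+z)*(p^2+q^2) + (a-z)*(r^2+s^2)
            + 2*x*(p*r+q*s) + 2*y*(p*s-q*r) : ℝ) : ℂ) := by
      apply Complex.ext <;>
        simp [dotProduct, Matrix.mulVec, Fin.sum_univ_two,
          Complex.add_re, Complex.add_im, Complex.mul_re, Complex.mul_im,
          Complex.sub_re, Complex.sub_im, Complex.ofReal_re, Complex.ofReal_im,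
          Complex.ofReal_pow, Complex.ofReal_add, Complex.ofReal_mul, Complex.ofReal_sub,
          Complex.ofReal_ofNat, pow_two] <;>
        ring
    rw [hE]
    rw [Complex.le_def]
    refine ⟨?_, (Complex.ofReal_im _).symm⟩
    simp only [Complex.ofReal_re, Complex.zero_re]
    have hB : 0 ≤ (a+z)*(p^2+q^2) + (a-z)*(r^2+s^2) := by positivity
    have hBC : (2*x*(p*r+q*s) + 2*y*(p*s-q*r))^2
        ≤ ((a+z)*(p^2+q^2) + (a-z)*(r^2+s^2))^2 := by
      have hpq : (0:ℝ) ≤ (p^2+q^2)*(r^2+s^2) := by positivity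
      have hslack : (0:ℝ) ≤ a^2 - z^2 - x^2 - y^2 := by linarith
      nlinarith [sq_nonneg (x*(p*s-q*r) - y*(p*r+q*s)),
        sq_nonneg ((a+z)*(p^2+q^2) - (a-z)*(r^2+s^2)),
        mul_nonneg hslack hpq]
    have h1 := Real.sqrt_le_sqrt hBC
    rw [Real.sqrt_sq_eq_abs, Real.sqrt_sq_eq_abs, _root_.abs_of_nonneg hB] at h1
    have h2 := neg_abs_le (2*x*(p*r+q*s) + 2*y*(p*s-q*r))
    linarith

lemma trace_qubitState (w : EuclideanSpace ℝ (Fin 3)) : (qubitState w).trace = 1 := by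
  simp [qubitState, blochOp, pauli1, pauli2, pauli3, Matrix.trace_fin_two,
    Matrix.smul_apply, Matrix.add_apply, Matrix.one_apply]

/-- Two-state discrimination, degenerate case: if
`‖q 0 • v 0 - q 1 • v 1‖ ≤ q 0 - q 1`, the guessing probability is `q 0`,
attained by `M 0 = 1`, `M 1 = 0`. -/
theorem two_state_degenerate
    (q : Fin 2 → ℝ) (hq : IsPriors q) (hq01 : q 1 ≤ q 0)
    (v : Fin 2 → EuclideanSpace ℝ (Fin 3)) (hv : ∀ i, ‖v i‖ ≤ 1)
    (hdeg : ‖q 0 • v 0 - q 1 • v 1‖ ≤ q 0 - q 1) :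
    IsGreatest {x | ∃ M : Fin 2 → Matrix (Fin 2) (Fin 2) ℂ, IsPOVM M ∧ succProb q v M = x}
      (q 0) ∧
    IsPOVM ![(1 : Matrix (Fin 2) (Fin 2) ℂ), 0] ∧
    succProb q v ![(1 : Matrix (Fin 2) (Fin 2) ℂ), 0] = q 0 := by
  have hPOVM0 : IsPOVM ![(1 : Matrix (Fin 2) (Fin 2) ℂ), 0] := by
    constructor
    · intro i
      fin_cases i
      · exact Matrix.PosSemidef.one
      · exact Matrix.PosSemidef.zero
    · simp [Fin.sum_univ_two]
  have hsucc0 : succProb q v ![(1 : Matrix (Fin 2) (Fin 2) ℂ), 0] = q 0 := by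
    simp [succProb, Fin.sum_univ_two, trace_qubitState]
  -- the difference operator and its positivity
  set u : EuclideanSpace ℝ (Fin 3) := q 0 • v 0 - q 1 • v 1 with hu
  have ha : 0 ≤ q 0 - q 1 := by linarith
  have hsq : (u 0)^2 + (u 1)^2 + (u 2)^2 ≤ (q 0 - q 1)^2 := by
    have h1 : ‖u‖^2 ≤ (q 0 - q 1)^2 := by
      have := mul_self_le_mul_self (norm_nonneg u) hdeg
      nlinarith
    have h2 : ‖u‖^2 = (u 0)^2 + (u 1)^2 + (u 2)^2 := by
      rw [EuclideanSpace.norm_eq, Real.sq_sqrt (by positivity)]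
      simp [Fin.sum_univ_three, sq_abs]
    linarith
  have hXpsd : ((q 0 : ℂ) • qubitState (v 0) - (q 1 : ℂ) • qubitState (v 1)).PosSemidef := by
    have heq : ((q 0 : ℂ) • qubitState (v 0) - (q 1 : ℂ) • qubitState (v 1)) =
        (1/2 : ℂ) • !![(((q 0 - q 1 : ℝ)) : ℂ) + (u 2 : ℝ),
          ((u 0 : ℝ) : ℂ) - ((u 1 : ℝ) : ℂ)*Complex.I;
          ((u 0 : ℝ) : ℂ) + ((u 1 : ℝ) : ℂ)*Complex.I,
          (((q 0 - q 1 : ℝ)) : ℂ) - (u 2 : ℝ)] := by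
      ext i j
      fin_cases i <;> fin_cases j <;>
        simp [hu, qubitState, blochOp, pauli1, pauli2, pauli3, Matrix.smul_apply,
          Matrix.add_apply, Matrix.sub_apply, Matrix.one_apply, PiLp.sub_apply,
          PiLp.smul_apply, smul_eq_mul] <;>
        push_cast <;> ring
    rw [heq]
    exact half_smul_psd (key_psd (q 0 - q 1) (u 0) (u 1) (u 2) ha hsq)
  refine ⟨⟨⟨![(1 : Matrix (Fin 2) (Fin 2) ℂ), 0], hPOVM0, hsucc0⟩, ?_⟩, hPOVM0, hsucc0⟩
  rintro x ⟨M, hM, rfl⟩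
  have hM1 : M 1 = 1 - M 0 := by
    have h2 := hM.2
    rw [Fin.sum_univ_two] at h2
    exact eq_sub_of_add_eq' h2
  have hXM : 0 ≤ (((q 0 : ℂ) • qubitState (v 0) - (q 1 : ℂ) • qubitState (v 1)) * M 1).trace :=
    psd_trace_mul_nonneg hXpsd (hM.1 1)
  have hre : 0 ≤ ((((q 0 : ℂ) • qubitState (v 0) - (q 1 : ℂ) • qubitState (v 1)) * M 1).trace).re := by
    rw [Complex.le_def] at hXM
    simpa using hXM.1
  have hexp : ((((q 0 : ℂ) • qubitState (v 0) - (q 1 : ℂ) • qubitState (v 1)) * M 1).trace).re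
      = q 0 * (1 - ((qubitState (v 0) * M 0).trace).re)
        - q 1 * (((qubitState (v 1) * M 1).trace).re) := by
    have hsplit : (((q 0 : ℂ) • qubitState (v 0) - (q 1 : ℂ) • qubitState (v 1)) * M 1)
        = (q 0 : ℂ) • (qubitState (v 0) - qubitState (v 0) * M 0)
          - (q 1 : ℂ) • (qubitState (v 1) * M 1) := by
      rw [Matrix.sub_mul, Matrix.smul_mul, Matrix.smul_mul]
      congr 1
      rw [hM1, Matrix.mul_sub, Matrix.mul_one]
    rw [hsplit, Matrix.trace_sub, Matrix.trace_smul, Matrix.trace_smul, Matrix.trace_sub,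
      trace_qubitState]
    simp [Complex.sub_re, Complex.mul_re, smul_eq_mul]
  have hProb : succProb q v M = q 0 * ((qubitState (v 0) * M 0).trace).re
      + q 1 * ((qubitState (v 1) * M 1).trace).re := by
    simp [succProb, Fin.sum_univ_two]
  rw [hProb]
  rw [hexp] at hre
  nlinarith [hre]
end

section
/- Trace norm of a difference of weighted qubit states in Bloch form: Let q₀, q₁ ∈ ℝ be nonnegative and let v₀, v₁ ∈ EuclideanSpace ℝ (Fin 3) with ‖v₀‖ ≤ 1 and ‖v₁‖ ≤ 1. The matrix A = q₀ • ρ(v₀) − q₁ • ρ(v₁) is Hermitian, and the sum over its eigenvalues of their absolute values equals max (‖q₀ • v₀ − q₁ • v₁‖) (|q₀ − q₁|); equivalently, its two eigenvalues are ((q₀ − q₁) ± ‖q₀ • v₀ − q₁ • v₁‖)/2. -/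
open Matrix Complex Finset RealInnerProductSpace
open scoped ComplexOrder

lemma trace_eq_sum_eig {n : Type*} [Fintype n] [DecidableEq n] {A : Matrix n n ℂ}
    (hA : A.IsHermitian) : A.trace = ∑ i, (hA.eigenvalues i : ℂ) := by
  exact hA.trace_eq_sum_eigenvalues

lemma abs_aux (t n : ℝ) (hn : 0 ≤ n) :
    |(t + n) / 2| + |(t - n) / 2| = max n |t| := by
  rcases abs_cases t with ⟨h1, h2⟩ | ⟨h1, h2⟩ <;>
    rcases max_cases n |t| with ⟨h3, h4⟩ | ⟨h3, h4⟩ <;>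
    rcases abs_cases ((t + n) / 2) with ⟨h5, h6⟩ | ⟨h5, h6⟩ <;>
    rcases abs_cases ((t - n) / 2) with ⟨h7, h8⟩ | ⟨h7, h8⟩ <;> linarith

/-- Trace norm of a difference of weighted qubit states in Bloch form: the matrix
`q₀ • ρ(v₀) - q₁ • ρ(v₁)` is Hermitian, the sum of the absolute values of its
eigenvalues is `max ‖q₀ • v₀ - q₁ • v₁‖ |q₀ - q₁|`, and its two eigenvalues are
`((q₀ - q₁) ± ‖q₀ • v₀ - q₁ • v₁‖) / 2`. -/
theorem trace_norm_weighted_difference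
    (q₀ q₁ : ℝ) (hq₀ : 0 ≤ q₀) (hq₁ : 0 ≤ q₁)
    (v₀ v₁ : EuclideanSpace ℝ (Fin 3)) (hv₀ : ‖v₀‖ ≤ 1) (hv₁ : ‖v₁‖ ≤ 1) :
    ((q₀ : ℂ) • qubitState v₀ - (q₁ : ℂ) • qubitState v₁).IsHermitian ∧
    ∀ hA : ((q₀ : ℂ) • qubitState v₀ - (q₁ : ℂ) • qubitState v₁).IsHermitian,
      (∑ i, |hA.eigenvalues i| = max ‖q₀ • v₀ - q₁ • v₁‖ |q₀ - q₁|) ∧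
      ∃ σ : Equiv.Perm (Fin 2),
        hA.eigenvalues (σ 0) = ((q₀ - q₁) + ‖q₀ • v₀ - q₁ • v₁‖) / 2 ∧
        hA.eigenvalues (σ 1) = ((q₀ - q₁) - ‖q₀ • v₀ - q₁ • v₁‖) / 2 := by
  have hherm : ((q₀ : ℂ) • qubitState v₀ - (q₁ : ℂ) • qubitState v₁).IsHermitian := by
    ext i j
    fin_cases i <;> fin_cases j <;>
      simp [qubitState, blochOp, pauli1, pauli2, pauli3, Matrix.conjTranspose_apply,
        Matrix.one_apply]
  refine ⟨hherm, fun hA => ?_⟩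
  set t : ℝ := q₀ - q₁ with ht
  set nn : ℝ := ‖q₀ • v₀ - q₁ • v₁‖ with hnn
  have hn0 : 0 ≤ nn := norm_nonneg _
  have hn2 : nn ^ 2 = (q₀ * v₀ 0 - q₁ * v₁ 0) ^ 2 + (q₀ * v₀ 1 - q₁ * v₁ 1) ^ 2 +
      (q₀ * v₀ 2 - q₁ * v₁ 2) ^ 2 := by
    rw [hnn, EuclideanSpace.norm_eq, Real.sq_sqrt (by positivity)]
    simp [Fin.sum_univ_three, sq_abs]
  set e : Fin 2 → ℝ := hA.eigenvalues with he
  have htr : ((q₀ : ℂ) • qubitState v₀ - (q₁ : ℂ) • qubitState v₁).trace = ((t : ℝ) : ℂ) := by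
    simp [Matrix.trace_fin_two, qubitState, blochOp, pauli1, pauli2, pauli3, Matrix.one_apply, ht]
  have hdet : ((q₀ : ℂ) • qubitState v₀ - (q₁ : ℂ) • qubitState v₁).det =
      (((t ^ 2 - nn ^ 2) / 4 : ℝ) : ℂ) := by
    rw [hn2]
    simp [Matrix.det_fin_two, qubitState, blochOp, pauli1, pauli2, pauli3, Matrix.one_apply, ht]
    push_cast
    ring_nf
    simp [Complex.I_sq]
    ring
  have hsum : e 0 + e 1 = t := by
    have h := (trace_eq_sum_eig hA).symm.trans htr
    rw [Fin.sum_univ_two] at h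
    exact_mod_cast h
  have hprod : e 0 * e 1 = (t ^ 2 - nn ^ 2) / 4 := by
    have h := (hA.det_eq_prod_eigenvalues).symm.trans hdet
    rw [Fin.prod_univ_two] at h
    exact Complex.ofReal_inj.mp (by push_cast; push_cast at h; exact h)
  have hfac : (e 0 - e 1 - nn) * (e 0 - e 1 + nn) = 0 := by nlinarith
  have hmax : |(t + nn) / 2| + |(t - nn) / 2| = max nn |t| := abs_aux t nn hn0
  rcases mul_eq_zero.mp hfac with h | h
  · have h0 : e 0 = (t + nn) / 2 := by linarith
    have h1 : e 1 = (t - nn) / 2 := by linarith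
    refine ⟨by rw [Fin.sum_univ_two, h0, h1]; exact hmax, Equiv.refl _, by simpa using h0,
      by simpa using h1⟩
  · have h0 : e 0 = (t - nn) / 2 := by linarith
    have h1 : e 1 = (t + nn) / 2 := by linarith
    refine ⟨by rw [Fin.sum_univ_two, h0, h1]; linarith, Equiv.swap 0 1, ?_, ?_⟩
    · simpa using h1
    · simpa using h0
end

section
/- Unique intersection of the two hyperbola branches (Appendix): Let l₁, l₂ > 0, θ₁ ∈ Set.Ioo 0 π, 0 ≤ e₁ < l₁, 0 ≤ e₂ < l₂, and assume (l₁*Real.cos θ₁ + e₁)/(l₁+e₁) < (l₁−e₁)/(l₂−e₂) and (l₂*Real.cos θ₁ + e₂)/(l₂+e₂) < (l₂−e₂)/(l₁−e₁). Then there exists a unique χ ∈ Set.Ioo 0 θ₁ such that l₁*Real.cos χ + e₁ > 0, l₂*Real.cos (θ₁−χ) + e₂ > 0, and (l₁^2−e₁^2) * (l₂*Real.cos (θ₁−χ) + e₂) = (l₂^2−e₂^2) * (l₁*Real.cos χ + e₁). -/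
open Matrix Complex Finset RealInnerProductSpace
open scoped ComplexOrder

/-- Unique intersection of the two hyperbola branches (Appendix). -/
theorem hyperbola_branches_unique_intersection
    (l₁ l₂ e₁ e₂ θ₁ : ℝ) (hl₁ : 0 < l₁) (hl₂ : 0 < l₂)
    (hθ₁ : θ₁ ∈ Set.Ioo 0 Real.pi)
    (he₁ : 0 ≤ e₁) (he₁l : e₁ < l₁) (he₂ : 0 ≤ e₂) (he₂l : e₂ < l₂)
    (hcond₁ : (l₁ * Real.cos θ₁ + e₁) / (l₁ + e₁) < (l₁ - e₁) / (l₂ - e₂))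
    (hcond₂ : (l₂ * Real.cos θ₁ + e₂) / (l₂ + e₂) < (l₂ - e₂) / (l₁ - e₁)) :
    ∃! χ : ℝ, χ ∈ Set.Ioo 0 θ₁ ∧
      0 < l₁ * Real.cos χ + e₁ ∧
      0 < l₂ * Real.cos (θ₁ - χ) + e₂ ∧
      (l₁ ^ 2 - e₁ ^ 2) * (l₂ * Real.cos (θ₁ - χ) + e₂) =
        (l₂ ^ 2 - e₂ ^ 2) * (l₁ * Real.cos χ + e₁) := by

  set A := l₁ ^ 2 - e₁ ^ 2 with hA
  set B := l₂ ^ 2 - e₂ ^ 2 with hB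
  have hApos : 0 < A := by nlinarith
  have hBpos : 0 < B := by nlinarith
  obtain ⟨hθ0, hθπ⟩ := hθ₁
  set f : ℝ → ℝ := fun χ => A * (l₂ * Real.cos (θ₁ - χ) + e₂) - B * (l₁ * Real.cos χ + e₁)
    with hf
  have hcont : Continuous f := by
    apply Continuous.sub
    · exact continuous_const.mul (((Real.continuous_cos.comp
        (continuous_const.sub continuous_id)).const_smul l₂).add continuous_const)
    · exact continuous_const.mul ((Real.continuous_cos.const_smul l₁).add continuous_const)
  have hf0 : f 0 < 0 := by
    have h2 : (l₂ * Real.cos θ₁ + e₂) * (l₁ - e₁) < (l₂ - e₂) * (l₂ + e₂) := by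
      rw [div_lt_div_iff₀ (by linarith) (by linarith)] at hcond₂
      linarith
    simp only [hf, sub_zero, Real.cos_zero]
    nlinarith [mul_lt_mul_of_pos_right h2 (show (0:ℝ) < l₁ + e₁ by linarith)]
  have hfθ : 0 < f θ₁ := by
    have h1 : (l₁ * Real.cos θ₁ + e₁) * (l₂ - e₂) < (l₁ - e₁) * (l₁ + e₁) := by
      rw [div_lt_div_iff₀ (by linarith) (by linarith)] at hcond₁
      linarith
    simp only [hf, sub_self, Real.cos_zero]
    nlinarith [mul_lt_mul_of_pos_right h1 (show (0:ℝ) < l₂ + e₂ by linarith)]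
  -- strict monotonicity
  have hderiv : ∀ x : ℝ, HasDerivAt f (A * (l₂ * Real.sin (θ₁ - x)) + B * (l₁ * Real.sin x)) x := by
    intro x
    have h1 : HasDerivAt (fun χ : ℝ => θ₁ - χ) (-1) x := by
      simpa [Pi.sub_def] using (hasDerivAt_const x θ₁).sub (hasDerivAt_id x)
    have h2 : HasDerivAt (fun χ : ℝ => Real.cos (θ₁ - χ)) (Real.sin (θ₁ - x)) x := by
      have := (Real.hasDerivAt_cos (θ₁ - x)).comp x h1
      simpa [Function.comp_def] using this
    have h3 : HasDerivAt (fun χ : ℝ => A * (l₂ * Real.cos (θ₁ - χ) + e₂))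
        (A * (l₂ * Real.sin (θ₁ - x))) x := (((h2.const_mul l₂).add_const e₂).const_mul A)
    have h4 : HasDerivAt (fun χ : ℝ => B * (l₁ * Real.cos χ + e₁))
        (B * (l₁ * (-Real.sin x))) x :=
      ((((Real.hasDerivAt_cos x).const_mul l₁).add_const e₁).const_mul B)
    have := h3.sub h4
    simpa [mul_comm, mul_assoc, sub_neg_eq_add, Pi.sub_def] using this
  have hmono : StrictMonoOn f (Set.Icc 0 θ₁) := by
    apply strictMonoOn_of_deriv_pos (convex_Icc 0 θ₁) hcont.continuousOn
    intro x hx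
    rw [interior_Icc] at hx
    rw [(hderiv x).deriv]
    have hs1 : 0 < Real.sin x := Real.sin_pos_of_pos_of_lt_pi hx.1 (lt_trans hx.2 hθπ)
    have hs2 : 0 < Real.sin (θ₁ - x) :=
      Real.sin_pos_of_pos_of_lt_pi (by linarith [hx.2]) (by linarith [hx.1])
    positivity
  -- existence of a root
  have hroot : ∃ χ ∈ Set.Ioo 0 θ₁, f χ = 0 := by
    have := intermediate_value_Ioo (le_of_lt hθ0) hcont.continuousOn
    have h0 : (0 : ℝ) ∈ Set.Ioo (f 0) (f θ₁) := ⟨hf0, hfθ⟩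
    obtain ⟨χ, hχmem, hχ⟩ := this h0
    exact ⟨χ, hχmem, hχ⟩
  obtain ⟨χ, hχmem, hχ0⟩ := hroot
  -- positivity at the root
  have hposcos : 0 < l₁ * Real.cos χ + e₁ ∨ 0 < l₂ * Real.cos (θ₁ - χ) + e₂ := by
    rcases le_or_gt χ (θ₁ - χ) with h | h
    · left
      have : χ < Real.pi / 2 := by linarith [hχmem.2, hθπ]
      have := Real.cos_pos_of_mem_Ioo ⟨by linarith [hχmem.1, Real.pi_pos], this⟩
      nlinarith
    · right
      have : θ₁ - χ < Real.pi / 2 := by linarith [hχmem.2, hθπ]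
      have := Real.cos_pos_of_mem_Ioo ⟨by linarith [hχmem.2, Real.pi_pos], this⟩
      nlinarith
  have heq : A * (l₂ * Real.cos (θ₁ - χ) + e₂) = B * (l₁ * Real.cos χ + e₁) := by
    have : f χ = 0 := hχ0
    simp only [hf] at this
    linarith
  have hpos1 : 0 < l₁ * Real.cos χ + e₁ := by
    rcases hposcos with h | h
    · exact h
    · nlinarith
  have hpos2 : 0 < l₂ * Real.cos (θ₁ - χ) + e₂ := by nlinarith
  refine ⟨χ, ⟨hχmem, hpos1, hpos2, heq⟩, ?_⟩
  rintro y ⟨hymem, -, -, hyeq⟩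
  have hy0 : f y = 0 := by simp only [hf]; linarith
  have hy' : y ∈ Set.Icc 0 θ₁ := ⟨le_of_lt hymem.1, le_of_lt hymem.2⟩
  have hχ' : χ ∈ Set.Icc 0 θ₁ := ⟨le_of_lt hχmem.1, le_of_lt hχmem.2⟩
  exact hmono.injOn hy' hχ' (by rw [hy0, hχ0])
end

section
/- Nonempty intersection of a triangle interior with a hyperbola branch (Appendix): Let T₁, T₂, T₃ ∈ EuclideanSpace ℝ (Fin 2) be affinely independent and let e ≥ 0. Then there exists a point Q in the interior of the convex hull of {T₁, T₂, T₃} with dist Q T₂ − dist Q T₁ = e if and only if e < dist T₁ T₂. -/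
open Matrix Complex Finset RealInnerProductSpace
open scoped ComplexOrder

private lemma line_aux0 (T₁ T₂ T₃ : EuclideanSpace ℝ (Fin 2))
    (h0 : T₂ 0 - T₁ 0 ≠ 0)
    (h30 : (T₂ 1 - T₁ 1) * (T₃ 0 - T₁ 0) = (T₂ 0 - T₁ 0) * (T₃ 1 - T₁ 1)) :
    T₃ = AffineMap.lineMap T₁ T₂ ((T₃ 0 - T₁ 0) / (T₂ 0 - T₁ 0)) := by
  ext i
  rw [AffineMap.lineMap_apply_module']
  fin_cases i <;>
    [skip; skip] <;>
    simp only [PiLp.add_apply, PiLp.smul_apply, PiLp.sub_apply, smul_eq_mul, Fin.zero_eta, Fin.mk_one] <;>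
    field_simp <;> nlinarith [h30]

private lemma line_aux1 (T₁ T₂ T₃ : EuclideanSpace ℝ (Fin 2))
    (h1 : T₂ 1 - T₁ 1 ≠ 0)
    (h30 : (T₂ 1 - T₁ 1) * (T₃ 0 - T₁ 0) = (T₂ 0 - T₁ 0) * (T₃ 1 - T₁ 1)) :
    T₃ = AffineMap.lineMap T₁ T₂ ((T₃ 1 - T₁ 1) / (T₂ 1 - T₁ 1)) := by
  ext i
  rw [AffineMap.lineMap_apply_module']
  fin_cases i <;>
    [skip; skip] <;>
    simp only [PiLp.add_apply, PiLp.smul_apply, PiLp.sub_apply, smul_eq_mul, Fin.zero_eta, Fin.mk_one] <;>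
    field_simp <;> nlinarith [h30]

private lemma halfplane_aux (g : EuclideanSpace ℝ (Fin 2) →L[ℝ] ℝ)
    (T₁ T₂ T₃ : EuclideanSpace ℝ (Fin 2)) (h12 : g T₂ = g T₁) :
    ∀ x ∈ convexHull ℝ ({T₁, T₂, T₃} : Set (EuclideanSpace ℝ (Fin 2))),
      0 ≤ (g x - g T₁) * (g T₃ - g T₁) := by
  intro x hx
  have hsub : ({T₁, T₂, T₃} : Set (EuclideanSpace ℝ (Fin 2))) ⊆
      {y | 0 ≤ (g y - g T₁) * (g T₃ - g T₁)} := by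
    rintro y (rfl | rfl | rfl)
    · show (0:ℝ) ≤ _
      rw [sub_self, zero_mul]
    · show (0:ℝ) ≤ _
      rw [h12, sub_self, zero_mul]
    · show (0:ℝ) ≤ _
      exact mul_self_nonneg _
  have hconv : Convex ℝ {y : EuclideanSpace ℝ (Fin 2) | 0 ≤ (g y - g T₁) * (g T₃ - g T₁)} := by
    intro y hy z hz s t hs ht hst
    simp only [Set.mem_setOf_eq] at hy hz ⊢
    have hg : g (s • y + t • z) = s * g y + t * g z := by
      simp [map_add, _root_.map_smul, smul_eq_mul]
    rw [hg]
    have hs1 : s = 1 - t := by linarith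
    have hexp : (s * g y + t * g z - g T₁) * (g T₃ - g T₁)
        = s * ((g y - g T₁) * (g T₃ - g T₁)) + t * ((g z - g T₁) * (g T₃ - g T₁)) := by
      rw [hs1]; ring
    rw [hexp]
    exact add_nonneg (mul_nonneg hs hy) (mul_nonneg ht hz)
  exact convexHull_min hsub hconv hx

/-- An interior point of the triangle cannot lie on the level set of a nonconstant
affine functional that contains two of the vertices. -/
private lemma interior_contra (g : EuclideanSpace ℝ (Fin 2) →L[ℝ] ℝ)
    (T₁ T₂ T₃ Q v : EuclideanSpace ℝ (Fin 2))
    (hg12 : g T₂ = g T₁) (hgQ : g Q = g T₁) (hc : g T₃ ≠ g T₁) (hgv : 0 < g v)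
    (hQ : Q ∈ interior (convexHull ℝ ({T₁, T₂, T₃} : Set (EuclideanSpace ℝ (Fin 2))))) :
    False := by
  obtain ⟨ε, hε, hball⟩ := Metric.mem_nhds_iff.1 (mem_interior_iff_mem_nhds.1 hQ)
  obtain ⟨c, hcdef⟩ : ∃ c : ℝ, c = g T₃ - g T₁ := ⟨_, rfl⟩
  have hcne : c ≠ 0 := hcdef ▸ sub_ne_zero.2 hc
  obtain ⟨w, hwdef⟩ : ∃ w : EuclideanSpace ℝ (Fin 2), w = c • v := ⟨_, rfl⟩
  obtain ⟨δ, hδdef⟩ : ∃ δ : ℝ, δ = ε / (2 * (‖w‖ + 1)) := ⟨_, rfl⟩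
  have hδpos : 0 < δ := by rw [hδdef]; positivity
  have hmem : Q - δ • w ∈ Metric.ball Q ε := by
    rw [Metric.mem_ball, dist_eq_norm]
    have hQQ : Q - δ • w - Q = -(δ • w) := by abel
    rw [hQQ, norm_neg, norm_smul, Real.norm_eq_abs, abs_of_pos hδpos]
    calc δ * ‖w‖ ≤ δ * (‖w‖ + 1) := by nlinarith [norm_nonneg w]
      _ < ε := by
          rw [hδdef, div_mul_eq_mul_div, div_lt_iff₀ (by positivity)]
          nlinarith [norm_nonneg w]
  have hhp := halfplane_aux g T₁ T₂ T₃ hg12 _ (hball hmem)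
  have hgQ' : g (Q - δ • w) = g Q - δ * (c * g v) := by
    rw [map_sub, _root_.map_smul, hwdef, _root_.map_smul]
    simp only [smul_eq_mul, mul_assoc]
  rw [← hcdef, hgQ', hgQ] at hhp
  have hrw : (g T₁ - δ * (c * g v) - g T₁) * c = -(δ * (c * c) * g v) := by ring
  rw [hrw] at hhp
  have : 0 < δ * (c * c) * g v :=
    mul_pos (mul_pos hδpos (mul_self_pos.2 hcne)) hgv
  linarith


/-- Nonempty intersection of a triangle interior with a hyperbola branch
(Appendix). -/
theorem triangle_hyperbola_intersection
    (T₁ T₂ T₃ : EuclideanSpace ℝ (Fin 2))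
    (hT : AffineIndependent ℝ ![T₁, T₂, T₃]) (e : ℝ) (he : 0 ≤ e) :
    (∃ Q ∈ interior (convexHull ℝ {T₁, T₂, T₃}),
        dist Q T₂ - dist Q T₁ = e) ↔ e < dist T₁ T₂ := by
  have h12 : T₁ ≠ T₂ := by
    simpa using hT.injective.ne (show (0 : Fin 3) ≠ 1 by decide)
  have hD : (0:ℝ) < dist T₁ T₂ := dist_pos.2 h12
  have hd01 : T₂ 0 - T₁ 0 ≠ 0 ∨ T₂ 1 - T₁ 1 ≠ 0 := by
    by_contra h
    push_neg at h
    apply h12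
    ext i
    fin_cases i
    · show T₁ 0 = T₂ 0
      linarith [h.1]
    · show T₁ 1 = T₂ 1
      linarith [h.2]
  obtain ⟨g, hgapp⟩ : ∃ g : EuclideanSpace ℝ (Fin 2) →L[ℝ] ℝ,
      ∀ x : EuclideanSpace ℝ (Fin 2),
        g x = (T₂ 1 - T₁ 1) * x 0 - (T₂ 0 - T₁ 0) * x 1 := by
    refine ⟨(T₂ 1 - T₁ 1) • EuclideanSpace.proj 0 - (T₂ 0 - T₁ 0) • EuclideanSpace.proj 1,
      fun x => ?_⟩
    simp
  have hg12 : g T₂ = g T₁ := by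
    rw [hgapp, hgapp]; ring
  have hncol : ¬ Collinear ℝ ({T₁, T₂, T₃} : Set (EuclideanSpace ℝ (Fin 2))) :=
    affineIndependent_iff_not_collinear_set.1 hT
  have hc : g T₃ ≠ g T₁ := by
    intro hce
    apply hncol
    have h30 : (T₂ 1 - T₁ 1) * (T₃ 0 - T₁ 0) = (T₂ 0 - T₁ 0) * (T₃ 1 - T₁ 1) := by
      rw [hgapp, hgapp] at hce
      nlinarith [hce]
    have hline : ∃ t : ℝ, T₃ = AffineMap.lineMap T₁ T₂ t := by
      rcases hd01 with h0 | h1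
      · exact ⟨_, line_aux0 T₁ T₂ T₃ h0 h30⟩
      · exact ⟨_, line_aux1 T₁ T₂ T₃ h1 h30⟩
    obtain ⟨t, ht⟩ := hline
    have hmem : T₃ ∈ line[ℝ, T₁, T₂] := ht ▸ AffineMap.lineMap_mem_affineSpan_pair t T₁ T₂
    have hcol : Collinear ℝ ({T₃, T₁, T₂} : Set (EuclideanSpace ℝ (Fin 2))) :=
      collinear_insert_of_mem_affineSpan_pair hmem
    exact hcol.subset (by intro x hx; simp at hx ⊢; tauto)
  obtain ⟨v, hgv⟩ : ∃ v : EuclideanSpace ℝ (Fin 2), 0 < g v := by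
    refine ⟨(WithLp.equiv 2 (Fin 2 → ℝ)).symm ![T₂ 1 - T₁ 1, -(T₂ 0 - T₁ 0)], ?_⟩
    rw [hgapp]
    simp only [WithLp.equiv_symm_apply, PiLp.toLp_apply, Matrix.cons_val_zero, Matrix.cons_val_one,
      Matrix.head_cons]
    rcases hd01 with h | h <;>
      nlinarith [mul_self_nonneg (T₂ 0 - T₁ 0), mul_self_nonneg (T₂ 1 - T₁ 1),
        mul_self_pos.2 h]
  constructor
  · rintro ⟨Q, hQ, hQe⟩
    by_contra hlt
    push_neg at hlt
    have htri : dist Q T₂ ≤ dist Q T₁ + dist T₁ T₂ := dist_triangle _ _ _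
    have heq : dist Q T₁ + dist T₁ T₂ = dist Q T₂ := by linarith
    have hw : Wbtw ℝ Q T₁ T₂ := dist_add_dist_eq_iff.1 heq
    obtain ⟨t, ht01, hteq⟩ := hw
    have ht1 : t ≠ 1 := by
      rintro rfl
      simp only [AffineMap.lineMap_apply_one] at hteq
      exact h12 hteq.symm
    have ht1' : (1 : ℝ) - t ≠ 0 := sub_ne_zero.2 (Ne.symm ht1)
    have hgQ : g Q = g T₁ := by
      have h' := congrArg g hteq
      rw [AffineMap.lineMap_apply_module] at h'
      simp only [map_add, _root_.map_smul, smul_eq_mul, hg12] at h'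
      have h2 : (1 - t) * g T₁ = (1 - t) * g Q := by linear_combination - h'
      exact (mul_left_cancel₀ ht1' h2).symm
    exact interior_contra g T₁ T₂ T₃ Q v hg12 hgQ hc hgv hQ
  · intro he'
    have hconv : Convex ℝ (convexHull ℝ ({T₁, T₂, T₃} : Set (EuclideanSpace ℝ (Fin 2)))) :=
      convex_convexHull ℝ _
    have hspan : affineSpan ℝ ({T₁, T₂, T₃} : Set (EuclideanSpace ℝ (Fin 2))) = ⊤ := by
      have hcard : Fintype.card (Fin 3)
          = Module.finrank ℝ (EuclideanSpace ℝ (Fin 2)) + 1 := by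
        simp [finrank_euclideanSpace_fin]
      have := hT.affineSpan_eq_top_iff_card_eq_finrank_add_one.2 hcard
      rw [show Set.range ![T₁, T₂, T₃] = ({T₁, T₂, T₃} : Set (EuclideanSpace ℝ (Fin 2))) by
        ext x
        simp [Matrix.range_cons, Matrix.range_empty]
        tauto] at this
      exact this
    have hne : (interior (convexHull ℝ
        ({T₁, T₂, T₃} : Set (EuclideanSpace ℝ (Fin 2))))).Nonempty := by
      rw [hconv.interior_nonempty_iff_affineSpan_eq_top, affineSpan_convexHull]
      exact hspan
    obtain ⟨C, hC⟩ := hne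
    have hT1K : T₁ ∈ convexHull ℝ ({T₁, T₂, T₃} : Set (EuclideanSpace ℝ (Fin 2))) :=
      subset_convexHull ℝ _ (by simp)
    have hT2K : T₂ ∈ convexHull ℝ ({T₁, T₂, T₃} : Set (EuclideanSpace ℝ (Fin 2))) :=
      subset_convexHull ℝ _ (by simp)
    set f : EuclideanSpace ℝ (Fin 2) → ℝ := fun Q => dist Q T₂ - dist Q T₁ with hf
    have hfc : Continuous f :=
      (continuous_id.dist continuous_const).sub (continuous_id.dist continuous_const)
    have approx : ∀ P ∈ convexHull ℝ ({T₁, T₂, T₃} : Set (EuclideanSpace ℝ (Fin 2))),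
        ∀ U : Set ℝ, IsOpen U → f P ∈ U →
        ∃ a ∈ interior (convexHull ℝ ({T₁, T₂, T₃} : Set (EuclideanSpace ℝ (Fin 2)))),
          f a ∈ U := by
      intro P hP U hU hfU
      have hcont : Continuous fun t : ℝ => AffineMap.lineMap P C t := AffineMap.lineMap_continuous
      have htend : Filter.Tendsto (fun t : ℝ => AffineMap.lineMap P C t)
          (nhdsWithin 0 (Set.Ioi 0)) (nhds P) := by
        have h0 : Filter.Tendsto (fun t : ℝ => AffineMap.lineMap P C t)
            (nhdsWithin 0 (Set.Ioi 0)) (nhds (AffineMap.lineMap P C (0:ℝ))) :=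
          (hcont.tendsto 0).mono_left nhdsWithin_le_nhds
        simpa [AffineMap.lineMap_apply_zero] using h0
      have hev1 : ∀ᶠ t : ℝ in nhdsWithin 0 (Set.Ioi 0),
          f (AffineMap.lineMap P C t) ∈ U :=
        ((hfc.tendsto P).comp htend).eventually (hU.mem_nhds hfU)
      have hev2 : ∀ᶠ t : ℝ in nhdsWithin 0 (Set.Ioi 0), t ∈ Set.Ioc (0:ℝ) 1 :=
        Ioc_mem_nhdsGT one_pos
      obtain ⟨t, htU, ht01⟩ := (hev1.and hev2).exists
      refine ⟨AffineMap.lineMap P C t, ?_, htU⟩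
      rw [AffineMap.lineMap_apply_module]
      exact hconv.combo_closure_interior_mem_interior (subset_closure hP) hC
        (by linarith [ht01.2]) ht01.1 (by ring)
    have hfT1 : f T₁ = dist T₁ T₂ := by simp [hf]
    have hfT2 : f T₂ = -dist T₁ T₂ := by simp [hf, dist_comm]
    obtain ⟨a, haI, hfa⟩ := approx T₁ hT1K (Set.Ioi e) isOpen_Ioi (by simp only [Set.mem_Ioi, hfT1]; exact he')
    obtain ⟨b, hbI, hfb⟩ := approx T₂ hT2K (Set.Iio e) isOpen_Iio (by simp only [Set.mem_Iio, hfT2]; linarith)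
    have hpc : IsPreconnected (interior (convexHull ℝ
        ({T₁, T₂, T₃} : Set (EuclideanSpace ℝ (Fin 2))))) :=
      (hconv.interior).isPreconnected
    have hival := hpc.intermediate_value hbI haI hfc.continuousOn
    have hemem : e ∈ Set.Icc (f b) (f a) := ⟨le_of_lt (Set.mem_Iio.1 hfb), le_of_lt (Set.mem_Ioi.1 hfa)⟩
    obtain ⟨Q, hQI, hQe⟩ := hival hemem
    exact ⟨Q, hQI, hQe⟩
end

section
/- Criterion for a point on a ray from a vertex to lie inside a triangle (Appendix, Fig. 1): Let T₁, T₂, T₃ ∈ EuclideanSpace ℝ (Fin 2) be affinely independent, with θ₁ = ∠ T₂ T₁ T₃ and θ₂ = ∠ T₁ T₂ T₃ the interior angles at T₁ and T₂. Let O ∈ EuclideanSpace ℝ (Fin 2) with O ≠ T₁, set χ = ∠ T₂ T₁ O, and assume 0 < χ < θ₁ and that O and T₃ lie strictly on the same side of the line through T₁ and T₂. Then O lies in the interior of the convex hull of {T₁, T₂, T₃} if and only if dist T₁ O < dist T₁ T₂ * Real.sin θ₂ / Real.sin (χ + θ₂). -/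
open Matrix Complex Finset RealInnerProductSpace
open scoped ComplexOrder

lemma inner2 (v w : EuclideanSpace ℝ (Fin 2)) : ⟪v, w⟫ = v 0 * w 0 + v 1 * w 1 := by
  simp [PiLp.inner_apply, Fin.sum_univ_two, RCLike.inner_apply]
  ring


noncomputable def cr' (v w : EuclideanSpace ℝ (Fin 2)) : ℝ := v 0 * w 1 - v 1 * w 0

lemma app_eq {v w : EuclideanSpace ℝ (Fin 2)} (h : v = w) (i : Fin 2) : v i = w i := by rw [h]

lemma cr_shift {T₁ p X u : EuclideanSpace ℝ (Fin 2)} {r : ℝ} (hp : r • u = p - T₁) :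
    cr' u (X - T₁) = cr' u (X - p) := by
  have h0 := app_eq hp 0
  have h1 := app_eq hp 1
  simp [PiLp.smul_apply, PiLp.sub_apply] at h0 h1
  unfold cr'
  simp only [PiLp.sub_apply]
  linear_combination u 1 * h0 - u 0 * h1

lemma exists_smul_of_cr_zero {u v : EuclideanSpace ℝ (Fin 2)} (hu : u ≠ 0)
    (h : cr' u v = 0) : ∃ r : ℝ, r • u = v := by
  unfold cr' at h
  have h01 : u 0 ≠ 0 ∨ u 1 ≠ 0 := by
    by_contra hc
    push_neg at hc
    exact hu (by ext i; fin_cases i <;> simp [hc.1, hc.2])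
  rcases h01 with h0 | h1
  · exact ⟨v 0 / u 0, by ext i; fin_cases i <;> simp [PiLp.smul_apply] <;> field_simp <;> linarith [h]⟩
  · exact ⟨v 1 / u 1, by ext i; fin_cases i <;> simp [PiLp.smul_apply] <;> field_simp <;> linarith [h]⟩

lemma mem_line_iff {T₁ T₂ X : EuclideanSpace ℝ (Fin 2)} :
    X ∈ line[ℝ, T₁, T₂] ↔ ∃ r : ℝ, r • (T₂ - T₁) = X - T₁ := by
  have : X = (X - T₁) +ᵥ T₁ := by simp
  rw [this, vadd_left_mem_affineSpan_pair]
  simp [vsub_eq_sub]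

lemma mem_line_of_cr {T₁ T₂ X : EuclideanSpace ℝ (Fin 2)} (h : T₂ ≠ T₁)
    (hc : cr' (T₂ - T₁) (X - T₁) = 0) : X ∈ line[ℝ, T₁, T₂] :=
  mem_line_iff.mpr (exists_smul_of_cr_zero (sub_ne_zero.mpr h) hc)

lemma ssameside_cr_pos {T₁ T₂ X Y : EuclideanSpace ℝ (Fin 2)} (h2 : T₂ ≠ T₁)
    (h : (affineSpan ℝ {T₁, T₂}).SSameSide X Y) :
    0 < cr' (T₂ - T₁) (X - T₁) * cr' (T₂ - T₁) (Y - T₁) := by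
  obtain ⟨⟨p₁, hp₁, p₂, hp₂, hray⟩, hX, hY⟩ := h
  set u := T₂ - T₁ with hu
  obtain ⟨r₁, hr₁⟩ := mem_line_iff.mp hp₁
  obtain ⟨r₂, hr₂⟩ := mem_line_iff.mp hp₂
  have eX : cr' u (X - T₁) = cr' u (X - p₁) := cr_shift hr₁
  have eY : cr' u (Y - T₁) = cr' u (Y - p₂) := cr_shift hr₂
  have hXp : X - p₁ ≠ 0 := sub_ne_zero.mpr (fun he => hX (he ▸ hp₁))
  have hYp : Y - p₂ ≠ 0 := sub_ne_zero.mpr (fun he => hY (he ▸ hp₂))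
  rw [vsub_eq_sub, vsub_eq_sub] at hray
  obtain ⟨a, b, ha, hb, hab⟩ := hray.exists_pos hXp hYp
  have hcrY : cr' u (Y - p₂) ≠ 0 := by
    intro hc
    exact hY (mem_line_of_cr h2 (by rw [eY]; exact hc))
  have key : a * cr' u (X - p₁) = b * cr' u (Y - p₂) := by
    have h0 := app_eq hab 0
    have h1 := app_eq hab 1
    simp [PiLp.smul_apply, PiLp.sub_apply] at h0 h1
    unfold cr'
    simp only [PiLp.sub_apply]
    linear_combination u 0 * h1 - u 1 * h0
  rw [eX, eY]
  have : cr' u (X - p₁) = (b / a) * cr' u (Y - p₂) := by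
    field_simp
    linarith [key]
  rw [this]
  have hba : 0 < b / a := div_pos hb ha
  have hsq : 0 < cr' u (Y - p₂) * cr' u (Y - p₂) := by
    rcases lt_or_gt_of_ne hcrY with hlt | hgt
    · exact mul_pos_of_neg_of_neg hlt hlt
    · exact mul_pos hgt hgt
  calc (0:ℝ) < (b / a) * (cr' u (Y - p₂) * cr' u (Y - p₂)) := mul_pos hba hsq
    _ = b / a * cr' u (Y - p₂) * cr' u (Y - p₂) := by ring

lemma sin_mul_norm (v w : EuclideanSpace ℝ (Fin 2)) :
    Real.sin (InnerProductGeometry.angle v w) * (‖v‖ * ‖w‖) = |cr' v w| := by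
  rw [InnerProductGeometry.sin_angle_mul_norm_mul_norm, inner2, inner2, inner2]
  rw [show (v 0 * v 0 + v 1 * v 1) * (w 0 * w 0 + w 1 * w 1) -
      (v 0 * w 0 + v 1 * w 1) * (v 0 * w 0 + v 1 * w 1) = (cr' v w) ^ 2 by unfold cr'; ring]
  exact Real.sqrt_sq_eq_abs _

lemma cr_inner_identity (u o w : EuclideanSpace ℝ (Fin 2)) :
    cr' u w * ⟪u, o⟫ - ⟪u, w⟫ * cr' u o = ⟪u, u⟫ * cr' o w := by
  simp only [inner2]
  unfold cr'
  ring

lemma main_identity (u o w : EuclideanSpace ℝ (Fin 2)) :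
    ⟪u, u⟫ * cr' u w - ⟪u, o⟫ * cr' u w + cr' u o * ⟪u, w - u⟫ =
      ⟪u, u⟫ * cr' (u - o) (w - o) := by
  unfold cr'
  simp only [inner2, PiLp.sub_apply]
  ring

lemma inner2' (v w : EuclideanSpace ℝ (Fin 2)) : ⟪v, w⟫ = v 0 * w 0 + v 1 * w 1 := inner2 v w

set_option maxHeartbeats 1000000 in
open EuclideanGeometry in
/-- Criterion for a point on a ray from a vertex to lie inside a triangle
(Appendix, Fig. 1). -/
theorem point_in_triangle_criterion
    (T₁ T₂ T₃ O : EuclideanSpace ℝ (Fin 2))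
    (hT : AffineIndependent ℝ ![T₁, T₂, T₃]) (hO : O ≠ T₁)
    (θ₁ θ₂ χ : ℝ)
    (hθ₁ : θ₁ = ∠ T₂ T₁ T₃) (hθ₂ : θ₂ = ∠ T₁ T₂ T₃) (hχ : χ = ∠ T₂ T₁ O)
    (hχ0 : 0 < χ) (hχθ₁ : χ < θ₁)
    (hside : (affineSpan ℝ {T₁, T₂}).SSameSide O T₃) :
    O ∈ interior (convexHull ℝ {T₁, T₂, T₃}) ↔
      dist T₁ O < dist T₁ T₂ * Real.sin θ₂ / Real.sin (χ + θ₂) := by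
  -- distinctness
  have h21 : T₂ ≠ T₁ := by
    intro h
    exact (by decide : ¬ ((1 : Fin 3) = 0)) (hT.injective (by simpa using h))
  have h31 : T₃ ≠ T₁ := by
    intro h
    exact (by decide : ¬ ((2 : Fin 3) = 0)) (hT.injective (by simpa using h))
  have h32 : T₃ ≠ T₂ := by
    intro h
    exact (by decide : ¬ ((2 : Fin 3) = 1)) (hT.injective (by simpa using h))
  set u : EuclideanSpace ℝ (Fin 2) := T₂ - T₁ with hu
  set w : EuclideanSpace ℝ (Fin 2) := T₃ - T₁ with hw
  set o : EuclideanSpace ℝ (Fin 2) := O - T₁ with ho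
  have hT₃ : T₃ ∉ affineSpan ℝ {T₁, T₂} := hside.2.2
  have hD : cr' u w ≠ 0 := fun h => hT₃ (mem_line_of_cr h21 h)
  have hcruo : 0 < cr' u o * cr' u w := ssameside_cr_pos h21 hside
  -- norms
  have hnu : 0 < ‖u‖ := norm_pos_iff.mpr (sub_ne_zero.mpr h21)
  have hno : 0 < ‖o‖ := norm_pos_iff.mpr (sub_ne_zero.mpr hO)
  have hwu : w - u = T₃ - T₂ := by rw [hw, hu]; abel
  have hnwu : 0 < ‖w - u‖ := by rw [hwu]; exact norm_pos_iff.mpr (sub_ne_zero.mpr h32)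
  -- angles as vector angles
  have hχ' : χ = InnerProductGeometry.angle u o := by
    rw [hχ]; unfold EuclideanGeometry.angle; rw [vsub_eq_sub, vsub_eq_sub]
  have hθ₁' : θ₁ = InnerProductGeometry.angle u w := by
    rw [hθ₁]; unfold EuclideanGeometry.angle; rw [vsub_eq_sub, vsub_eq_sub]
  have hθ₂' : θ₂ = InnerProductGeometry.angle (-u) (w - u) := by
    rw [hθ₂]; unfold EuclideanGeometry.angle; rw [vsub_eq_sub, vsub_eq_sub]
    congr 1
    · rw [hu]; abel
    · rw [hwu]
  -- sin/cos formulas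
  have hsχ : Real.sin χ * (‖u‖ * ‖o‖) = |cr' u o| := by rw [hχ']; exact sin_mul_norm u o
  have hcχ : Real.cos χ * (‖u‖ * ‖o‖) = ⟪u, o⟫ := by
    rw [hχ']; exact InnerProductGeometry.cos_angle_mul_norm_mul_norm u o
  have hsθ₁ : Real.sin θ₁ * (‖u‖ * ‖w‖) = |cr' u w| := by rw [hθ₁']; exact sin_mul_norm u w
  have hcθ₁ : Real.cos θ₁ * (‖u‖ * ‖w‖) = ⟪u, w⟫ := by
    rw [hθ₁']; exact InnerProductGeometry.cos_angle_mul_norm_mul_norm u w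
  have hcrneg : cr' (-u) (w - u) = -cr' u w := by
    unfold cr'; simp only [PiLp.sub_apply, PiLp.neg_apply]; ring
  have hsθ₂ : Real.sin θ₂ * (‖u‖ * ‖w - u‖) = |cr' u w| := by
    rw [hθ₂']
    have := sin_mul_norm (-u) (w - u)
    rw [norm_neg, hcrneg, abs_neg] at this
    exact this
  have hcθ₂ : Real.cos θ₂ * (‖u‖ * ‖w - u‖) = ⟪-u, w - u⟫ := by
    rw [hθ₂']
    have := InnerProductGeometry.cos_angle_mul_norm_mul_norm (-u) (w - u)
    rwa [norm_neg] at this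
  -- angle bounds
  have hθ₁pi : θ₁ ≤ Real.pi := by rw [hθ₁]; exact EuclideanGeometry.angle_le_pi _ _ _
  have hθ₂0 : 0 ≤ θ₂ := by rw [hθ₂]; exact EuclideanGeometry.angle_nonneg _ _ _
  have hθ₃0 : 0 < ∠ T₂ T₃ T₁ := by
    rcases (EuclideanGeometry.angle_nonneg T₂ T₃ T₁).lt_or_eq with h | h
    · exact h
    · exfalso
      have hcol : Collinear ℝ {T₂, T₃, T₁} := EuclideanGeometry.collinear_of_angle_eq_zero h.symm
      exact hT₃ (hcol.mem_affineSpan_of_mem_of_ne (by simp) (by simp) (by simp) h21.symm)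
  have hsum : θ₂ + ∠ T₂ T₃ T₁ + θ₁ = Real.pi := by
    rw [hθ₂, hθ₁, EuclideanGeometry.angle_comm T₂ T₁ T₃]
    exact EuclideanGeometry.angle_add_angle_add_angle_eq_pi T₃ h21
  have hχθ₂pi : χ + θ₂ < Real.pi := by linarith
  have hsinsum : 0 < Real.sin (χ + θ₂) := Real.sin_pos_of_pos_of_lt_pi (by linarith) hχθ₂pi
  -- positivity of s
  have hinnerpos : 0 < ⟪u, u⟫ := by
    rw [real_inner_self_eq_norm_mul_norm]
    positivity
  have hsin1 : 0 < Real.sin (θ₁ - χ) :=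
    Real.sin_pos_of_pos_of_lt_pi (by linarith) (by linarith)
  have key1 : 0 < |cr' u w| * ⟪u, o⟫ - ⟪u, w⟫ * |cr' u o| := by
    have e : |cr' u w| * ⟪u, o⟫ - ⟪u, w⟫ * |cr' u o| =
        (Real.sin θ₁ * Real.cos χ - Real.cos θ₁ * Real.sin χ) * ((‖u‖ * ‖w‖) * (‖u‖ * ‖o‖)) := by
      rw [← hsθ₁, ← hcθ₁, ← hsχ, ← hcχ]; ring
    rw [e, ← Real.sin_sub]
    have hnw : 0 < ‖w‖ := norm_pos_iff.mpr (sub_ne_zero.mpr h31)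
    positivity
  have hcrow : 0 < cr' o w * cr' u w := by
    have hid := cr_inner_identity u o w
    rcases hD.lt_or_gt with hDneg | hDpos
    · have hcuo : cr' u o < 0 := by
        rcases mul_pos_iff.mp hcruo with ⟨hx, hy⟩ | ⟨hx, hy⟩
        · linarith
        · exact hx
      rw [abs_of_neg hDneg, abs_of_neg hcuo] at key1
      have hneg : ⟪u, u⟫ * cr' o w < 0 := by linarith
      have hcow : cr' o w < 0 := by
        by_contra hc
        push_neg at hc
        exact absurd hneg (not_lt.mpr (mul_nonneg hinnerpos.le hc))
      exact mul_pos_of_neg_of_neg hcow hDneg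
    · have hcuo : 0 < cr' u o := by
        rcases mul_pos_iff.mp hcruo with ⟨hx, hy⟩ | ⟨hx, hy⟩
        · exact hx
        · linarith
      rw [abs_of_pos hDpos, abs_of_pos hcuo] at key1
      have hpos : 0 < ⟪u, u⟫ * cr' o w := by linarith
      have hcow : 0 < cr' o w := by
        by_contra hc
        push_neg at hc
        exact absurd hpos (not_lt.mpr (mul_nonpos_iff.mpr (Or.inl ⟨hinnerpos.le, hc⟩)))
      exact mul_pos hcow hDpos
  -- barycentric coordinates
  set S : ℝ := cr' o w / cr' u w with hS
  set T : ℝ := cr' u o / cr' u w with hTd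
  have hSpos : 0 < S := by rw [hS, div_pos_iff, ← mul_pos_iff]; exact hcrow
  have hTpos : 0 < T := by rw [hTd, div_pos_iff, ← mul_pos_iff]; exact hcruo
  have hdecomp : o = S • u + T • w := by
    ext i
    fin_cases i
    · have hid : cr' u w * (o 0) = cr' o w * u 0 + cr' u o * w 0 := by unfold cr'; ring
      simp only [PiLp.add_apply, PiLp.smul_apply, smul_eq_mul, hS, hTd]
      field_simp
      exact (mul_comm _ _).trans hid
    · have hid : cr' u w * (o 1) = cr' o w * u 1 + cr' u o * w 1 := by unfold cr'; ring
      simp only [PiLp.add_apply, PiLp.smul_apply, smul_eq_mul, hS, hTd]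
      field_simp
      exact (mul_comm _ _).trans hid
  have hOcomb : O = (1 - S - T) • T₁ + S • T₂ + T • T₃ := by
    have : O = o + T₁ := by rw [ho]; abel
    rw [this, hdecomp, hu, hw]
    module
  -- affine basis
  have htop : affineSpan ℝ (Set.range ![T₁, T₂, T₃]) = ⊤ := by
    rw [hT.affineSpan_eq_top_iff_card_eq_finrank_add_one]
    simp [finrank_euclideanSpace]
  let b : AffineBasis (Fin 3) ℝ (EuclideanSpace ℝ (Fin 2)) := ⟨![T₁, T₂, T₃], hT, htop⟩
  have hrange : Set.range ⇑b = {T₁, T₂, T₃} := by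
    show Set.range ![T₁, T₂, T₃] = _
    ext x
    simp [Matrix.range_cons, Matrix.range_empty]
    tauto
  have hWsum : ∑ i, ![1 - S - T, S, T] i = 1 := by
    simp [Fin.sum_univ_three]
    ring
  have hcomb : Finset.univ.affineCombination ℝ ![T₁, T₂, T₃] ![1 - S - T, S, T] = O := by
    rw [Finset.affineCombination_eq_linear_combination _ _ _ hWsum, hOcomb]
    simp [Fin.sum_univ_three]
  have hcoord : ∀ i, b.coord i O = ![1 - S - T, S, T] i := by
    intro i
    rw [← hcomb]
    exact b.coord_apply_combination_of_mem (Finset.mem_univ i) hWsum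
  have hmem : O ∈ interior (convexHull ℝ ({T₁, T₂, T₃} : Set (EuclideanSpace ℝ (Fin 2)))) ↔
      0 < 1 - S - T := by
    rw [← hrange, b.interior_convexHull]
    simp only [Set.mem_setOf_eq]
    constructor
    · intro h
      have h0 := h 0
      rw [hcoord 0] at h0
      simpa using h0
    · intro h i
      rw [hcoord i]
      fin_cases i
      · simpa using h
      · simpa using hSpos
      · simpa using hTpos
  have hdist1 : dist T₁ O = ‖o‖ := by rw [dist_comm, dist_eq_norm]
  have hdist2 : dist T₁ T₂ = ‖u‖ := by rw [dist_comm, dist_eq_norm]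
  have hfrac : 1 - S - T = cr' (u - o) (w - o) / cr' u w := by
    rw [hS, hTd]
    field_simp
    unfold cr'
    simp only [PiLp.sub_apply]
    ring
  have hposf : 0 < ‖u‖ * ‖u‖ * ‖w - u‖ := by positivity
  have E1 : (‖o‖ * Real.sin (χ + θ₂)) * (‖u‖ * ‖u‖ * ‖w - u‖) =
      |cr' u o| * ⟪-u, w - u⟫ + ⟪u, o⟫ * |cr' u w| := by
    rw [Real.sin_add, ← hsχ, ← hcχ, ← hsθ₂, ← hcθ₂]
    ring
  have E2 : (‖u‖ * Real.sin θ₂) * (‖u‖ * ‖u‖ * ‖w - u‖) = ⟪u, u⟫ * |cr' u w| := by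
    rw [← hsθ₂, real_inner_self_eq_norm_mul_norm]
    ring
  have goal_iff : (‖o‖ * Real.sin (χ + θ₂) < ‖u‖ * Real.sin θ₂) ↔
      0 < cr' (u - o) (w - o) * cr' u w := by
    rw [← mul_lt_mul_iff_left₀ hposf, E1, E2]
    have hmi := main_identity u o w
    have hinn : ⟪-u, w - u⟫ = -⟪u, w - u⟫ := by rw [inner_neg_left]
    rcases hD.lt_or_gt with hDneg | hDpos
    · have hcuo : cr' u o < 0 := by
        rcases mul_pos_iff.mp hcruo with ⟨hx, hy⟩ | ⟨hx, hy⟩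
        · linarith
        · exact hx
      rw [abs_of_neg hDneg, abs_of_neg hcuo, hinn]
      constructor
      · intro h
        have hlt : ⟪u, u⟫ * cr' (u - o) (w - o) < 0 := by linarith [hmi]
        have hcc : cr' (u - o) (w - o) < 0 := by
          by_contra hc
          push_neg at hc
          exact absurd hlt (not_lt.mpr (mul_nonneg hinnerpos.le hc))
        exact mul_pos_of_neg_of_neg hcc hDneg
      · intro h
        have hcc : cr' (u - o) (w - o) < 0 := by
          rcases mul_pos_iff.mp h with ⟨hx, hy⟩ | ⟨hx, hy⟩
          · linarith
          · exact hx
        have hlt : ⟪u, u⟫ * cr' (u - o) (w - o) < 0 := mul_neg_of_pos_of_neg hinnerpos hcc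
        linarith [hmi]
    · have hcuo : 0 < cr' u o := by
        rcases mul_pos_iff.mp hcruo with ⟨hx, hy⟩ | ⟨hx, hy⟩
        · exact hx
        · linarith
      rw [abs_of_pos hDpos, abs_of_pos hcuo, hinn]
      constructor
      · intro h
        have hlt : 0 < ⟪u, u⟫ * cr' (u - o) (w - o) := by linarith [hmi]
        have hcc : 0 < cr' (u - o) (w - o) := by
          by_contra hc
          push_neg at hc
          exact absurd hlt (not_lt.mpr (mul_nonpos_iff.mpr (Or.inl ⟨hinnerpos.le, hc⟩)))
        exact mul_pos hcc hDpos
      · intro h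
        have hcc : 0 < cr' (u - o) (w - o) := by
          rcases mul_pos_iff.mp h with ⟨hx, hy⟩ | ⟨hx, hy⟩
          · exact hx
          · linarith
        have hlt : 0 < ⟪u, u⟫ * cr' (u - o) (w - o) := mul_pos hinnerpos hcc
        linarith [hmi]
  rw [hmem, hdist1, hdist2, lt_div_iff₀ hsinsum, hfrac, div_pos_iff, ← mul_pos_iff, goal_iff]
end
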